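/- arXiv:1008.2599 — 2 statements merged into one kernel-verified Lean document; each statement's English description precedes it below -/
import Mathlib

section
/- Suppose the Euler–Lagrange equation at the zero function holds: f_y(x,0,0) − (d/dx)[f_z(x,0,0)] = 0 for all x ∈ [a,b]. If p > 0 and q ≥ 0, then there exists ε > 0 such that for every y ∈ C¹[a,b] with y(a)=y(b)=0 and max_{x∈[a,b]} max(|y(x)|,|y'(x)|) < ε one has Φ(y) − Φ(0) ≥ (π²·p / (2(π² + 16(b−a)²)))·‖y‖²_{H¹[a,b]}. -/
open Set MeasureTheory intervalIntegral

/-- Partial derivative of `f` with respect to the second argument `y`. -/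
noncomputable def fy (f : ℝ → ℝ → ℝ → ℝ) (x y z : ℝ) : ℝ :=
  deriv (fun u => f x u z) y

/-- Partial derivative of `f` with respect to the third argument `z`. -/
noncomputable def fz (f : ℝ → ℝ → ℝ → ℝ) (x y z : ℝ) : ℝ :=
  deriv (fun u => f x y u) z

/-- Second partial derivative `f_{yy}`. -/
noncomputable def fyy (f : ℝ → ℝ → ℝ → ℝ) (x y z : ℝ) : ℝ :=
  deriv (fun u => fy f x u z) y

/-- Mixed second partial derivative `f_{yz}`. -/
noncomputable def fyz (f : ℝ → ℝ → ℝ → ℝ) (x y z : ℝ) : ℝ :=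
  deriv (fun u => fz f x u z) y

/-- Second partial derivative `f_{zz}`. -/
noncomputable def fzz (f : ℝ → ℝ → ℝ → ℝ) (x y z : ℝ) : ℝ :=
  deriv (fun u => fz f x y u) z

/-- The Euler–Lagrange variational functional `Φ(y) = ∫_a^b f(x, y, y') dx`. -/
noncomputable def Phi (f : ℝ → ℝ → ℝ → ℝ) (a b : ℝ) (y : ℝ → ℝ) : ℝ :=
  ∫ x in a..b, f x (y x) (deriv y x)

/-- The square of the Sobolev `H¹[a,b]` norm of `y`. -/
noncomputable def H1normSq (a b : ℝ) (y : ℝ → ℝ) : ℝ :=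
  ∫ x in a..b, ((y x) ^ 2 + (deriv y x) ^ 2)


section aux1
variable {f : ℝ → ℝ → ℝ → ℝ}
def Fm (f : ℝ → ℝ → ℝ → ℝ) : ℝ × ℝ × ℝ → ℝ := fun pt => f pt.1 pt.2.1 pt.2.2
noncomputable def Bm (f : ℝ → ℝ → ℝ → ℝ) : ℝ × ℝ × ℝ → (ℝ × ℝ × ℝ) →L[ℝ] (ℝ × ℝ × ℝ) →L[ℝ] ℝ :=
  fderiv ℝ (fderiv ℝ (Fm f))

lemma hasDerivAt_line (x y z u v : ℝ) (t : ℝ) :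
    HasDerivAt (fun t : ℝ => ((x, y + t * u, z + t * v) : ℝ × ℝ × ℝ)) (0, u, v) t := by
  apply HasDerivAt.prodMk (hasDerivAt_const _ _)
  apply HasDerivAt.prodMk
  · simpa [mul_comm] using ((hasDerivAt_id t).const_mul u).const_add y
  · simpa [mul_comm] using ((hasDerivAt_id t).const_mul v).const_add z

variable (hf : ContDiff ℝ 2 (Fm f))
include hf

lemma fy_eq (x y z : ℝ) : fy f x y z = fderiv ℝ (Fm f) (x, y, z) (0, 1, 0) := by
  have h1 : HasDerivAt (fun u => f x u z) (fderiv ℝ (Fm f) (x, y, z) (0, 1, 0)) y := by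
    have := ((hf.differentiable (by norm_num) (x, y, z)).hasFDerivAt).comp_hasDerivAt y
      (by simpa using hasDerivAt_line x 0 z 1 0 y)
    exact this
  exact h1.deriv

lemma fz_eq (x y z : ℝ) : fz f x y z = fderiv ℝ (Fm f) (x, y, z) (0, 0, 1) := by
  have h1 : HasDerivAt (fun u => f x y u) (fderiv ℝ (Fm f) (x, y, z) (0, 0, 1)) z := by
    have := ((hf.differentiable (by norm_num) (x, y, z)).hasFDerivAt).comp_hasDerivAt z
      (by simpa using hasDerivAt_line x y 0 0 1 z)
    exact this
  exact h1.deriv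

lemma contDiff_fderiv : ContDiff ℝ 1 (fderiv ℝ (Fm f)) := hf.fderiv_right (by norm_num)

lemma continuous_Bm : Continuous (Bm f) := (contDiff_fderiv hf).continuous_fderiv one_ne_zero

lemma hasDerivAt_fy_dir (x y z u v : ℝ) (t : ℝ) (w : ℝ × ℝ × ℝ) :
    HasDerivAt (fun t : ℝ => fderiv ℝ (Fm f) (x, y + t * u, z + t * v) w)
      ((Bm f (x, y + t * u, z + t * v) (0, u, v)) w) t := by
  have hd : HasFDerivAt (fderiv ℝ (Fm f)) (Bm f (x, y + t * u, z + t * v))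
      (x, y + t * u, z + t * v) :=
    ((contDiff_fderiv hf).differentiable one_ne_zero _).hasFDerivAt
  have h2 := hd.comp_hasDerivAt t (hasDerivAt_line x y z u v t)
  have h3 := ((ContinuousLinearMap.apply ℝ ℝ w).hasFDerivAt.comp_hasDerivAt t h2)
  simpa [ContinuousLinearMap.apply, Function.comp_def] using h3

lemma fyy_eq (x y z : ℝ) : fyy f x y z = Bm f (x, y, z) (0, 1, 0) (0, 1, 0) := by
  have : ∀ u, fy f x u z = fderiv ℝ (Fm f) (x, u, z) (0, 1, 0) := fun u => fy_eq hf x u z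
  rw [fyy, funext this]
  have := hasDerivAt_fy_dir hf x 0 z 1 0 y (0, 1, 0)
  simp only [zero_add, mul_one, mul_zero, add_zero] at this
  exact this.deriv

lemma fyz_eq (x y z : ℝ) : fyz f x y z = Bm f (x, y, z) (0, 1, 0) (0, 0, 1) := by
  have : ∀ u, fz f x u z = fderiv ℝ (Fm f) (x, u, z) (0, 0, 1) := fun u => fz_eq hf x u z
  rw [fyz, funext this]
  have := hasDerivAt_fy_dir hf x 0 z 1 0 y (0, 0, 1)
  simp only [zero_add, mul_one, mul_zero, add_zero] at this
  exact this.deriv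

lemma fzz_eq (x y z : ℝ) : fzz f x y z = Bm f (x, y, z) (0, 0, 1) (0, 0, 1) := by
  have : ∀ u, fz f x y u = fderiv ℝ (Fm f) (x, y, u) (0, 0, 1) := fun u => fz_eq hf x y u
  rw [fzz, funext this]
  have := hasDerivAt_fy_dir hf x y 0 0 1 z (0, 0, 1)
  simp only [zero_add, mul_one, mul_zero, add_zero] at this
  exact this.deriv

lemma Bm_symm (pt : ℝ × ℝ × ℝ) (v w : ℝ × ℝ × ℝ) : Bm f pt v w = Bm f pt w v :=
  second_derivative_symmetric (fun y => ((hf.differentiable (by norm_num) y).hasFDerivAt))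
    (((contDiff_fderiv hf).differentiable one_ne_zero pt).hasFDerivAt) v w

-- quadratic form expansion
lemma Bm_quad (pt : ℝ × ℝ × ℝ) (u v : ℝ) :
    Bm f pt (0, u, v) (0, u, v)
      = u^2 * (Bm f pt (0,1,0) (0,1,0)) + 2 * (u*v) * (Bm f pt (0,1,0) (0,0,1))
        + v^2 * (Bm f pt (0,0,1) (0,0,1)) := by
  have hw : ((0,u,v) : ℝ × ℝ × ℝ) = u • ((0,1,0) : ℝ × ℝ × ℝ) + v • ((0,0,1) : ℝ × ℝ × ℝ) := by
    simp [Prod.ext_iff]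
  rw [hw]
  simp only [map_add, _root_.map_smul, ContinuousLinearMap.add_apply,
    ContinuousLinearMap.smul_apply, smul_eq_mul]
  have := Bm_symm hf pt ((0,0,1) : ℝ × ℝ × ℝ) ((0,1,0) : ℝ × ℝ × ℝ)
  rw [this]
  ring

-- Taylor identity
lemma taylor_id (x u v : ℝ) :
    f x u v - f x 0 0 - fderiv ℝ (Fm f) (x,0,0) (0,u,v)
      = ∫ t in (0:ℝ)..1, (1 - t) * (Bm f (x, t*u, t*v) (0,u,v) (0,u,v)) := by
  set w : ℝ × ℝ × ℝ := (0,u,v) with hw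
  have hψ : ∀ t : ℝ, HasDerivAt (fun t : ℝ => fderiv ℝ (Fm f) (x, t*u, t*v) w)
      ((Bm f (x, t*u, t*v) (0,u,v)) w) t := by
    intro t
    have := hasDerivAt_fy_dir hf x 0 0 u v t w
    simpa using this
  have hφ : ∀ t : ℝ, HasDerivAt (fun t : ℝ => Fm f (x, t*u, t*v))
      (fderiv ℝ (Fm f) (x, t*u, t*v) w) t := by
    intro t
    have := ((hf.differentiable (by norm_num) (x, t*u, t*v)).hasFDerivAt).comp_hasDerivAt t
      (by simpa using hasDerivAt_line x 0 0 u v t)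
    exact this
  have hcont : Continuous (fun t : ℝ => fderiv ℝ (Fm f) (x, t*u, t*v) w) := by
    apply (ContinuousLinearMap.apply ℝ ℝ w).continuous.comp
    exact (contDiff_fderiv hf).continuous.comp (by fun_prop)
  have hcontB : Continuous (fun t : ℝ => (Bm f (x, t*u, t*v) (0,u,v)) w) := by
    have h1 : Continuous (fun t : ℝ => Bm f (x, t*u, t*v)) :=
      (continuous_Bm hf).comp (by fun_prop)
    have h2 : Continuous (fun t : ℝ => Bm f (x, t*u, t*v) ((0,u,v) : ℝ × ℝ × ℝ)) :=
      (ContinuousLinearMap.apply ℝ ((ℝ × ℝ × ℝ) →L[ℝ] ℝ) ((0,u,v) : ℝ × ℝ × ℝ)).continuous.comp h1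
    exact (ContinuousLinearMap.apply ℝ ℝ w).continuous.comp h2
  have hibp := intervalIntegral.integral_mul_deriv_eq_deriv_mul
    (u := fun t : ℝ => 1 - t) (u' := fun _ => (-1 : ℝ))
    (v := fun t : ℝ => fderiv ℝ (Fm f) (x, t*u, t*v) w)
    (v' := fun t : ℝ => (Bm f (x, t*u, t*v) (0,u,v)) w)
    (fun t _ => by simpa using ((hasDerivAt_id t).const_sub 1))
    (fun t _ => hψ t)
    ((continuous_const).intervalIntegrable 0 1)
    (hcontB.intervalIntegrable 0 1)
  have hftc : ∫ t in (0:ℝ)..1, fderiv ℝ (Fm f) (x, t*u, t*v) w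
      = Fm f (x, 1*u, 1*v) - Fm f (x, 0*u, 0*v) := by
    exact intervalIntegral.integral_eq_sub_of_hasDerivAt (fun t _ => hφ t)
      (hcont.intervalIntegrable 0 1)
  rw [hibp] at *
  have : ∫ t in (0:ℝ)..1, (-1 : ℝ) * fderiv ℝ (Fm f) (x, t*u, t*v) w
      = - ∫ t in (0:ℝ)..1, fderiv ℝ (Fm f) (x, t*u, t*v) w := by
    simp [intervalIntegral.integral_neg]
  rw [this, hftc] at *
  simp only [Fm] at *
  norm_num
  ring_nf

end aux1

section aux2
variable {f : ℝ → ℝ → ℝ → ℝ}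
variable (hf : ContDiff ℝ 2 (Fm f))
include hf

omit hf in
lemma norm_w_sq (u v : ℝ) : ‖((0,u,v) : ℝ × ℝ × ℝ)‖ * ‖((0,u,v) : ℝ × ℝ × ℝ)‖ ≤ u^2 + v^2 := by
  have h : ‖((0,u,v) : ℝ × ℝ × ℝ)‖ = max |u| |v| := by
    simp [Prod.norm_def, Real.norm_eq_abs]
  rw [h]
  rcases le_total |u| |v| with h1 | h1 <;>
    [rw [max_eq_right h1]; rw [max_eq_left h1]] <;> nlinarith [sq_abs u, sq_abs v, abs_nonneg u, abs_nonneg v]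

lemma remainder_bound (a b : ℝ) (η : ℝ) (hη : 0 < η) :
    ∃ ε > 0, ∀ x ∈ Icc a b, ∀ u v : ℝ, |u| ≤ ε → |v| ≤ ε →
      |f x u v - f x 0 0 - (fy f x 0 0 * u + fz f x 0 0 * v)
        - (fyy f x 0 0 * u^2 + 2 * fyz f x 0 0 * (u*v) + fzz f x 0 0 * v^2)/2|
      ≤ η * (u^2 + v^2) := by
  set K : Set (ℝ × ℝ × ℝ) := Icc a b ×ˢ (Icc (-1) 1 ×ˢ Icc (-1) 1) with hK
  have hKc : IsCompact K := (isCompact_Icc).prod ((isCompact_Icc).prod isCompact_Icc)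
  have hUC : UniformContinuousOn (Bm f) K := hKc.uniformContinuousOn_of_continuous ((continuous_Bm hf).continuousOn)
  have hUC2 : ∀ ε > 0, ∃ δ > 0, ∀ p ∈ K, ∀ q ∈ K,
      dist p q < δ → dist (Bm f p) (Bm f q) < ε := by
    have h := (Metric.uniformContinuousOn_iff (α := ℝ × ℝ × ℝ)
      (β := (ℝ × ℝ × ℝ) →L[ℝ] (ℝ × ℝ × ℝ) →L[ℝ] ℝ) (f := Bm f) (s := K)).mp hUC
    exact h
  obtain ⟨δ, hδ, hδ'⟩ := hUC2 η hη
  refine ⟨min (δ/2) 1, by positivity, ?_⟩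
  intro x hx u v hu hv
  set w : ℝ × ℝ × ℝ := (0,u,v) with hwdef
  have hu1 : |u| ≤ 1 := hu.trans (min_le_right _ _)
  have hv1 : |v| ≤ 1 := hv.trans (min_le_right _ _)
  have huδ : |u| ≤ δ/2 := hu.trans (min_le_left _ _)
  have hvδ : |v| ≤ δ/2 := hv.trans (min_le_left _ _)
  -- pointwise bound on the second derivative variation
  have key : ∀ t : ℝ, t ∈ Set.Icc (0:ℝ) 1 →
      ‖Bm f (x, t*u, t*v) w w - Bm f (x,0,0) w w‖ ≤ η * (u^2 + v^2) := by
    intro t ht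
    have htu : |t*u| ≤ |u| := by
      rw [abs_mul]
      calc |t| * |u| ≤ 1 * |u| := by
            apply mul_le_mul_of_nonneg_right _ (abs_nonneg u)
            rw [abs_le]; exact ⟨by linarith [ht.1], ht.2⟩
        _ = |u| := one_mul _
    have htv : |t*v| ≤ |v| := by
      rw [abs_mul]
      calc |t| * |v| ≤ 1 * |v| := by
            apply mul_le_mul_of_nonneg_right _ (abs_nonneg v)
            rw [abs_le]; exact ⟨by linarith [ht.1], ht.2⟩
        _ = |v| := one_mul _
    have hmem1 : ((x, t*u, t*v) : ℝ × ℝ × ℝ) ∈ K := by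
      refine ⟨hx, ?_, ?_⟩ <;> rw [Set.mem_Icc, ← abs_le] <;>
        [exact htu.trans hu1; exact htv.trans hv1]
    have hmem2 : ((x, 0, 0) : ℝ × ℝ × ℝ) ∈ K := by
      refine ⟨hx, ?_, ?_⟩ <;> simp
    have hdist : dist ((x, t*u, t*v) : ℝ × ℝ × ℝ) ((x,0,0) : ℝ × ℝ × ℝ) < δ := by
      rw [Prod.dist_eq, Prod.dist_eq]
      simp only [dist_self, Real.dist_eq, sub_zero]
      exact max_lt hδ (max_lt (lt_of_le_of_lt (htu.trans huδ) (by linarith))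
        (lt_of_le_of_lt (htv.trans hvδ) (by linarith)))
    have hB := hδ' _ hmem1 _ hmem2 hdist
    have hB' : ‖Bm f (x, t*u, t*v) - Bm f (x,0,0)‖ < η := by
      exact (dist_eq_norm (Bm f (x, t*u, t*v)) (Bm f (x,0,0))).symm.trans_lt hB
    calc ‖Bm f (x, t*u, t*v) w w - Bm f (x,0,0) w w‖
        = ‖((Bm f (x, t*u, t*v) - Bm f (x,0,0)) w) w‖ := by
          simp [ContinuousLinearMap.sub_apply]
      _ ≤ ‖Bm f (x, t*u, t*v) - Bm f (x,0,0)‖ * ‖w‖ * ‖w‖ :=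
          ContinuousLinearMap.le_opNorm₂ _ _ _
      _ ≤ η * (‖w‖ * ‖w‖) := by
          rw [mul_assoc]
          apply mul_le_mul_of_nonneg_right hB'.le (by positivity)
      _ ≤ η * (u^2 + v^2) := by
          apply mul_le_mul_of_nonneg_left (norm_w_sq u v) hη.le
  -- identify the first order term
  have hlin : fderiv ℝ (Fm f) (x,0,0) w = fy f x 0 0 * u + fz f x 0 0 * v := by
    have hw : w = u • ((0,1,0) : ℝ × ℝ × ℝ) + v • ((0,0,1) : ℝ × ℝ × ℝ) := by
      simp [hwdef, Prod.ext_iff]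
    rw [hw, map_add, _root_.map_smul, _root_.map_smul, fy_eq hf, fz_eq hf]
    simp [smul_eq_mul]; ring
  -- identify the quadratic term
  have hquad : Bm f (x,0,0) w w
      = fyy f x 0 0 * u^2 + 2 * fyz f x 0 0 * (u*v) + fzz f x 0 0 * v^2 := by
    rw [Bm_quad hf, fyy_eq hf, fyz_eq hf, fzz_eq hf]; ring
  -- continuity for integrability
  have hcontB : Continuous (fun t : ℝ => (Bm f (x, t*u, t*v)) w w) := by
    have h1 : Continuous (fun t : ℝ => Bm f (x, t*u, t*v)) :=
      (continuous_Bm hf).comp (by fun_prop)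
    have h2 : Continuous (fun t : ℝ => Bm f (x, t*u, t*v) w) :=
      (ContinuousLinearMap.apply ℝ ((ℝ × ℝ × ℝ) →L[ℝ] ℝ) w).continuous.comp h1
    exact (ContinuousLinearMap.apply ℝ ℝ w).continuous.comp h2
  -- the half-Q0 integral
  have hhalf : ∫ t in (0:ℝ)..1, (1 - t) * (Bm f (x,0,0) w w) = (Bm f (x,0,0) w w) / 2 := by
    rw [intervalIntegral.integral_mul_const]
    have : ∫ t in (0:ℝ)..1, (1 - t) = 1/2 := by
      rw [intervalIntegral.integral_sub intervalIntegrable_const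
        (intervalIntegral.intervalIntegrable_id), integral_one, integral_id]
      norm_num
    rw [this]; ring
  have hT := taylor_id hf x u v
  have hsplit : f x u v - f x 0 0 - (fy f x 0 0 * u + fz f x 0 0 * v)
        - (fyy f x 0 0 * u^2 + 2 * fyz f x 0 0 * (u*v) + fzz f x 0 0 * v^2)/2
      = ∫ t in (0:ℝ)..1, ((1 - t) * (Bm f (x, t*u, t*v) w w)
          - (1 - t) * (Bm f (x,0,0) w w)) := by
    rw [intervalIntegral.integral_sub
      ((by fun_prop : Continuous fun t : ℝ => (1-t) * (Bm f (x, t*u, t*v) w w)).intervalIntegrable 0 1)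
      ((by fun_prop : Continuous fun t : ℝ => (1-t) * (Bm f (x,0,0) w w)).intervalIntegrable 0 1)]
    rw [hhalf, ← hT, hlin, hquad]
    try ring
  rw [hsplit]
  have := intervalIntegral.norm_integral_le_of_norm_le_const
    (C := η * (u^2 + v^2)) (a := (0:ℝ)) (b := 1)
    (f := fun t => (1 - t) * (Bm f (x, t*u, t*v) w w) - (1 - t) * (Bm f (x,0,0) w w))
    (by
      intro t ht
      rw [Set.uIoc_of_le (by norm_num : (0:ℝ) ≤ 1)] at ht
      have ht' : t ∈ Set.Icc (0:ℝ) 1 := ⟨ht.1.le, ht.2⟩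
      have h1t : |1 - t| ≤ 1 := by rw [abs_le]; constructor <;> linarith [ht'.1, ht'.2]
      calc ‖(1 - t) * (Bm f (x, t*u, t*v) w w) - (1 - t) * (Bm f (x,0,0) w w)‖
          = |1 - t| * ‖Bm f (x, t*u, t*v) w w - Bm f (x,0,0) w w‖ := by
            rw [← mul_sub]; rw [norm_mul]; simp [Real.norm_eq_abs]
        _ ≤ 1 * (η * (u^2 + v^2)) := by
            apply mul_le_mul h1t (key t ht') (norm_nonneg _) zero_le_one
        _ = η * (u^2 + v^2) := one_mul _)
  simpa using this

end aux2

lemma sq_integral_le (g : ℝ → ℝ) (hg : Continuous g) {c d : ℝ} (hcd : c ≤ d) :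
    (∫ t in c..d, g t)^2 ≤ (d - c) * ∫ t in c..d, (g t)^2 := by
  rcases eq_or_lt_of_le hcd with rfl | hlt
  · simp
  set I := ∫ t in c..d, g t with hI
  set S := ∫ t in c..d, (g t)^2 with hS
  set k : ℝ := I / (d - c) with hk
  have hkd : k * (d - c) = I := by
    rw [hk]; field_simp
  have h0 : 0 ≤ ∫ t in c..d, (g t - k)^2 :=
    intervalIntegral.integral_nonneg hcd (fun t _ => sq_nonneg _)
  have e1 : ∫ t in c..d, (g t - k)^2
      = (∫ t in c..d, ((g t)^2 - 2*k*(g t))) + ∫ t in c..d, (k^2 : ℝ) := by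
    rw [← intervalIntegral.integral_add
      (((hg.fun_pow 2).fun_sub ((continuous_const.fun_mul hg))).intervalIntegrable c d)
      (continuous_const.intervalIntegrable c d)]
    apply intervalIntegral.integral_congr
    intro t _; ring
  have e2 : ∫ t in c..d, ((g t)^2 - 2*k*(g t)) = S - 2*k*I := by
    rw [intervalIntegral.integral_sub ((hg.fun_pow 2).intervalIntegrable c d)
      ((continuous_const.fun_mul hg).intervalIntegrable c d),
      intervalIntegral.integral_const_mul]
  have e3 : ∫ t in c..d, (k^2 : ℝ) = (d - c) * k^2 := by
    rw [intervalIntegral.integral_const]; simp [smul_eq_mul]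
  rw [e1, e2, e3] at h0
  nlinarith [h0, hlt, sq_nonneg (I - k*(d-c))]

lemma poincare (a b : ℝ) (hab : a < b) (y : ℝ → ℝ) (hy : ContDiff ℝ 1 y)
    (ha : y a = 0) (hb : y b = 0) :
    ∫ x in a..b, (y x)^2 ≤ (b - a)^2/8 * ∫ x in a..b, (deriv y x)^2 := by
  set m := (a + b) / 2 with hm
  have ham : a ≤ m := by rw [hm]; linarith
  have hmb : m ≤ b := by rw [hm]; linarith
  have hy' : Continuous (deriv y) := hy.continuous_deriv le_rfl
  have hyc : Continuous y := hy.continuous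
  have hS1 : (0:ℝ) ≤ ∫ x in a..m, (deriv y x)^2 :=
    intervalIntegral.integral_nonneg ham (fun t _ => sq_nonneg _)
  have hS2 : (0:ℝ) ≤ ∫ x in m..b, (deriv y x)^2 :=
    intervalIntegral.integral_nonneg hmb (fun t _ => sq_nonneg _)
  set S1 := ∫ x in a..m, (deriv y x)^2 with hS1d
  set S2 := ∫ x in m..b, (deriv y x)^2 with hS2d
  have hftc : ∀ c d : ℝ, ∫ t in c..d, deriv y t = y d - y c := fun c d =>
    intervalIntegral.integral_deriv_eq_sub
      (fun t _ => (hy.differentiable one_ne_zero).differentiableAt)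
      (hy'.intervalIntegrable c d)
  -- left half pointwise
  have hleft : ∀ x ∈ Icc a m, (y x)^2 ≤ (x - a) * S1 := by
    intro x hx
    have h1 : y x = ∫ t in a..x, deriv y t := by rw [hftc a x, ha, sub_zero]
    have h2 : (∫ t in a..x, deriv y t)^2 ≤ (x - a) * ∫ t in a..x, (deriv y t)^2 :=
      sq_integral_le _ hy' hx.1
    have h3 : ∫ t in a..x, (deriv y t)^2 ≤ S1 :=
      intervalIntegral.integral_mono_interval le_rfl hx.1 hx.2
        (Filter.Eventually.of_forall (fun t => sq_nonneg _))
        ((hy'.pow 2).intervalIntegrable a m)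
    calc (y x)^2 = (∫ t in a..x, deriv y t)^2 := by rw [h1]
      _ ≤ (x - a) * ∫ t in a..x, (deriv y t)^2 := h2
      _ ≤ (x - a) * S1 := by
          apply mul_le_mul_of_nonneg_left h3 (by linarith [hx.1])
  have hright : ∀ x ∈ Icc m b, (y x)^2 ≤ (b - x) * S2 := by
    intro x hx
    have h1 : (y x)^2 = (∫ t in x..b, deriv y t)^2 := by
      rw [hftc x b, hb, zero_sub, neg_sq]
    have h2 : (∫ t in x..b, deriv y t)^2 ≤ (b - x) * ∫ t in x..b, (deriv y t)^2 :=
      sq_integral_le _ hy' hx.2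
    have h3 : ∫ t in x..b, (deriv y t)^2 ≤ S2 :=
      intervalIntegral.integral_mono_interval hx.1 hx.2 le_rfl
        (Filter.Eventually.of_forall (fun t => sq_nonneg _))
        ((hy'.pow 2).intervalIntegrable m b)
    calc (y x)^2 = (∫ t in x..b, deriv y t)^2 := h1
      _ ≤ (b - x) * ∫ t in x..b, (deriv y t)^2 := h2
      _ ≤ (b - x) * S2 := by
          apply mul_le_mul_of_nonneg_left h3 (by linarith [hx.2])
  -- integrate both
  have hintL : ∫ x in a..m, (y x)^2 ≤ (m - a)^2/2 * S1 := by
    calc ∫ x in a..m, (y x)^2 ≤ ∫ x in a..m, (x - a) * S1 :=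
          intervalIntegral.integral_mono_on ham
            ((hyc.pow 2).intervalIntegrable a m)
            (((continuous_id.sub continuous_const).mul continuous_const).intervalIntegrable a m)
            hleft
      _ = (m - a)^2/2 * S1 := by
          rw [intervalIntegral.integral_mul_const,
            intervalIntegral.integral_sub intervalIntegral.intervalIntegrable_id
              intervalIntegrable_const, integral_id, intervalIntegral.integral_const]
          simp only [smul_eq_mul]
          ring
  have hintR : ∫ x in m..b, (y x)^2 ≤ (b - m)^2/2 * S2 := by
    calc ∫ x in m..b, (y x)^2 ≤ ∫ x in m..b, (b - x) * S2 :=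
          intervalIntegral.integral_mono_on hmb
            ((hyc.pow 2).intervalIntegrable m b)
            (((continuous_const.sub continuous_id).mul continuous_const).intervalIntegrable m b)
            hright
      _ = (b - m)^2/2 * S2 := by
          rw [intervalIntegral.integral_mul_const,
            intervalIntegral.integral_sub intervalIntegrable_const
              intervalIntegral.intervalIntegrable_id, integral_id, intervalIntegral.integral_const]
          simp only [smul_eq_mul]
          ring
  have hsplitY : ∫ x in a..b, (y x)^2 = (∫ x in a..m, (y x)^2) + ∫ x in m..b, (y x)^2 :=
    (intervalIntegral.integral_add_adjacent_intervals
      ((hyc.pow 2).intervalIntegrable a m) ((hyc.pow 2).intervalIntegrable m b)).symm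
  have hsplitD : ∫ x in a..b, (deriv y x)^2 = S1 + S2 :=
    (intervalIntegral.integral_add_adjacent_intervals
      ((hy'.pow 2).intervalIntegrable a m) ((hy'.pow 2).intervalIntegrable m b)).symm
  rw [hsplitY, hsplitD]
  have hma : m - a = (b-a)/2 := by rw [hm]; ring
  have hbm : b - m = (b-a)/2 := by rw [hm]; ring
  rw [hma] at hintL; rw [hbm] at hintR
  nlinarith [hintL, hintR, hS1, hS2]


theorem statement3
    (a b : ℝ) (hab : a < b)
    (f : ℝ → ℝ → ℝ → ℝ)
    (hf : ContDiff ℝ 2 (fun pt : ℝ × ℝ × ℝ => f pt.1 pt.2.1 pt.2.2))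
    (hfyz : ContDiff ℝ 1 (fun pt : ℝ × ℝ × ℝ => fyz f pt.1 pt.2.1 pt.2.2))
    (hEL : ∀ x ∈ Set.Icc a b, fy f x 0 0 - deriv (fun t => fz f t 0 0) x = 0)
    (p q : ℝ)
    (hp : IsLeast ((fun x => fzz f x 0 0) '' Set.Icc a b) p)
    (hq : IsLeast ((fun x => fyy f x 0 0 - deriv (fun t => fyz f t 0 0) x) '' Set.Icc a b) q)
    (hppos : 0 < p) (hqnonneg : 0 ≤ q) :
    ∃ ε > 0, ∀ y : ℝ → ℝ, ContDiff ℝ 1 y → y a = 0 → y b = 0 →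
      (∀ x ∈ Set.Icc a b, max |y x| |deriv y x| < ε) →
      Phi f a b y - Phi f a b (fun _ => 0) ≥
        Real.pi ^ 2 * p / (2 * (Real.pi ^ 2 + 16 * (b - a) ^ 2)) * H1normSq a b y := by
  have hF : ContDiff ℝ 2 (Fm f) := hf
  -- constants
  set L : ℝ := b - a with hL
  have hL0 : 0 < L := by rw [hL]; linarith
  set K : ℝ := L^2/8 with hKdef
  have hK0 : 0 < K := by positivity
  have hpi : (0:ℝ) < Real.pi := Real.pi_pos
  set r : ℝ := Real.pi ^ 2 * p / (2 * (Real.pi ^ 2 + 16 * L ^ 2)) with hrdef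
  set η : ℝ := p / (2 * (1 + K)) - r with hηdef
  have hπsq : Real.pi^2 < 128 := by nlinarith [Real.pi_lt_d2]
  have hη0 : 0 < η := by
    rw [hηdef, hrdef, hKdef]
    rw [div_sub_div _ _ (by positivity) (by positivity)]
    apply div_pos _ (by positivity)
    have h128 : (0:ℝ) < 128 - Real.pi^2 := by linarith
    nlinarith [mul_pos (mul_pos hppos (mul_pos hL0 hL0)) h128]
  have hr0 : 0 < r := by rw [hrdef]; positivity
  -- remainder bound
  obtain ⟨ε, hε0, hrem⟩ := remainder_bound hF a b η hη0
  refine ⟨ε, hε0, ?_⟩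
  intro y hy hya hyb hsmall
  -- continuity facts
  have hyc : Continuous y := hy.continuous
  have hy'c : Continuous (deriv y) := hy.continuous_deriv le_rfl
  have hline : ContDiff ℝ 1 (fun x : ℝ => ((x, 0, 0) : ℝ × ℝ × ℝ)) :=
    contDiff_id.prodMk contDiff_const
  have hBf : ContDiff ℝ 1 (fun x : ℝ => fz f x 0 0) := by
    have he : (fun x : ℝ => fz f x 0 0)
        = fun x : ℝ => (ContinuousLinearMap.apply ℝ ℝ ((0,0,1) : ℝ × ℝ × ℝ))
            (fderiv ℝ (Fm f) (x,0,0)) := funext (fun x => fz_eq hF x 0 0)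
    rw [he]
    exact (ContinuousLinearMap.apply ℝ ℝ _).contDiff.comp ((contDiff_fderiv hF).comp hline)
  have hD : ContDiff ℝ 1 (fun x : ℝ => fyz f x 0 0) := hfyz.comp hline
  have contA : Continuous (fun x : ℝ => fy f x 0 0) := by
    have he : (fun x : ℝ => fy f x 0 0)
        = fun x : ℝ => (ContinuousLinearMap.apply ℝ ℝ ((0,1,0) : ℝ × ℝ × ℝ))
            (fderiv ℝ (Fm f) (x,0,0)) := funext (fun x => fy_eq hF x 0 0)
    rw [he]
    exact (ContinuousLinearMap.apply ℝ ℝ _).continuous.comp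
      ((contDiff_fderiv hF).continuous.comp hline.continuous)
  have contC : Continuous (fun x : ℝ => fyy f x 0 0) := by
    have he : (fun x : ℝ => fyy f x 0 0)
        = fun x : ℝ => (ContinuousLinearMap.apply ℝ ℝ ((0,1,0) : ℝ × ℝ × ℝ))
            ((ContinuousLinearMap.apply ℝ ((ℝ × ℝ × ℝ) →L[ℝ] ℝ) ((0,1,0) : ℝ × ℝ × ℝ))
              (Bm f (x,0,0))) := funext (fun x => fyy_eq hF x 0 0)
    rw [he]
    exact (ContinuousLinearMap.apply ℝ ℝ _).continuous.comp
      ((ContinuousLinearMap.apply ℝ _ _).continuous.comp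
        ((continuous_Bm hF).comp hline.continuous))
  have contE : Continuous (fun x : ℝ => fzz f x 0 0) := by
    have he : (fun x : ℝ => fzz f x 0 0)
        = fun x : ℝ => (ContinuousLinearMap.apply ℝ ℝ ((0,0,1) : ℝ × ℝ × ℝ))
            ((ContinuousLinearMap.apply ℝ ((ℝ × ℝ × ℝ) →L[ℝ] ℝ) ((0,0,1) : ℝ × ℝ × ℝ))
              (Bm f (x,0,0))) := funext (fun x => fzz_eq hF x 0 0)
    rw [he]
    exact (ContinuousLinearMap.apply ℝ ℝ _).continuous.comp
      ((ContinuousLinearMap.apply ℝ _ _).continuous.comp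
        ((continuous_Bm hF).comp hline.continuous))
  have contBf : Continuous (fun x : ℝ => fz f x 0 0) := hBf.continuous
  have contBf' : Continuous (deriv (fun x : ℝ => fz f x 0 0)) := hBf.continuous_deriv le_rfl
  have contD : Continuous (fun x : ℝ => fyz f x 0 0) := hD.continuous
  have contD' : Continuous (deriv (fun x : ℝ => fyz f x 0 0)) := hD.continuous_deriv le_rfl
  -- integrals
  set S1 : ℝ := ∫ x in a..b, (y x)^2 with hS1d
  set S2 : ℝ := ∫ x in a..b, (deriv y x)^2 with hS2d
  have hS1nn : 0 ≤ S1 := intervalIntegral.integral_nonneg hab.le (fun t _ => sq_nonneg _)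
  have hS2nn : 0 ≤ S2 := intervalIntegral.integral_nonneg hab.le (fun t _ => sq_nonneg _)
  have hPoin : S1 ≤ K * S2 := by
    rw [hS1d, hS2d, hKdef, hL]
    exact poincare a b hab y hy hya hyb
  have hH1 : H1normSq a b y = S1 + S2 := by
    rw [H1normSq, intervalIntegral.integral_add ((hyc.fun_pow 2).intervalIntegrable a b)
      ((hy'c.fun_pow 2).intervalIntegrable a b)]
  -- Phi difference as an integral
  have contG : Continuous (fun x : ℝ => f x (y x) (deriv y x)) := by
    have : (fun x : ℝ => f x (y x) (deriv y x))
        = fun x : ℝ => Fm f (x, y x, deriv y x) := rfl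
    rw [this]
    exact hF.continuous.comp (continuous_id.prodMk (hyc.prodMk hy'c))
  have contG0 : Continuous (fun x : ℝ => f x 0 0) := by
    have : (fun x : ℝ => f x 0 0) = fun x : ℝ => Fm f (x, 0, 0) := rfl
    rw [this]
    exact hF.continuous.comp hline.continuous
  have hPhi0 : Phi f a b (fun _ => 0) = ∫ x in a..b, f x 0 0 := by
    rw [Phi]
    apply intervalIntegral.integral_congr
    intro x _
    simp
  have hPhidiff : Phi f a b y - Phi f a b (fun _ => 0)
      = ∫ x in a..b, (f x (y x) (deriv y x) - f x 0 0) := by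
    rw [hPhi0, Phi, intervalIntegral.integral_sub (contG.intervalIntegrable a b)
      (contG0.intervalIntegrable a b)]
  -- the lower bound function
  have contLin : Continuous (fun x : ℝ => fy f x 0 0 * y x + fz f x 0 0 * deriv y x) :=
    (contA.mul hyc).add (contBf.mul hy'c)
  have contMix : Continuous (fun x : ℝ => fyz f x 0 0 * (2 * y x * deriv y x)) :=
    contD.mul ((continuous_const.mul hyc).mul hy'c)
  have contQuad : Continuous (fun x : ℝ => (fyy f x 0 0 * (y x)^2
      + fyz f x 0 0 * (2 * y x * deriv y x) + fzz f x 0 0 * (deriv y x)^2)/2) :=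
    (((contC.mul (hyc.pow 2)).add contMix).add (contE.mul (hy'c.pow 2))).div_const 2
  have contEta : Continuous (fun x : ℝ => η * ((y x)^2 + (deriv y x)^2)) :=
    continuous_const.mul ((hyc.pow 2).add (hy'c.pow 2))
  set φ : ℝ → ℝ := fun x =>
    (fy f x 0 0 * y x + fz f x 0 0 * deriv y x)
    + (fyy f x 0 0 * (y x)^2 + fyz f x 0 0 * (2 * y x * deriv y x)
        + fzz f x 0 0 * (deriv y x)^2)/2
    - η * ((y x)^2 + (deriv y x)^2) with hφdef
  have contφ : Continuous φ := by
    rw [hφdef]; exact (contLin.add contQuad).sub contEta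
  have hmono : ∫ x in a..b, (f x (y x) (deriv y x) - f x 0 0) ≥ ∫ x in a..b, φ x := by
    apply intervalIntegral.integral_mono_on hab.le (contφ.intervalIntegrable a b)
      ((contG.fun_sub contG0).intervalIntegrable a b)
    intro x hx
    have h1 : |y x| ≤ ε := le_of_lt (lt_of_le_of_lt (le_max_left _ _) (hsmall x hx))
    have h2 : |deriv y x| ≤ ε := le_of_lt (lt_of_le_of_lt (le_max_right _ _) (hsmall x hx))
    have habs := (abs_le.mp (hrem x hx (y x) (deriv y x) h1 h2)).1
    simp only [hφdef]
    linarith [habs]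
  -- first-order term integrates to zero
  have hLint : ∫ x in a..b, (fy f x 0 0 * y x + fz f x 0 0 * deriv y x) = 0 := by
    have h1 : ∀ x ∈ Set.uIcc a b, HasDerivAt (fun t => fz f t 0 0 * y t)
        (deriv (fun t => fz f t 0 0) x * y x + fz f x 0 0 * deriv y x) x := fun x _ =>
      ((hBf.differentiable one_ne_zero x).hasDerivAt).mul ((hy.differentiable one_ne_zero x).hasDerivAt)
    have h2 := intervalIntegral.integral_eq_sub_of_hasDerivAt h1
      (((contBf'.mul hyc).add (contBf.mul hy'c)).intervalIntegrable a b)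
    have h3 : Set.EqOn (fun x => fy f x 0 0 * y x + fz f x 0 0 * deriv y x)
        (fun x => deriv (fun t => fz f t 0 0) x * y x + fz f x 0 0 * deriv y x)
        (Set.uIcc a b) := by
      intro x hx
      rw [Set.uIcc_of_le hab.le] at hx
      have := hEL x hx
      simp only
      rw [show fy f x 0 0 = deriv (fun t => fz f t 0 0) x by linarith]
    rw [intervalIntegral.integral_congr h3, h2, hya, hyb]
    ring
  -- integration by parts for the mixed term
  have hDint : ∫ x in a..b, fyz f x 0 0 * (2 * y x * deriv y x)
      = - ∫ x in a..b, deriv (fun t => fyz f t 0 0) x * (y x)^2 := by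
    have hv : ∀ x ∈ Set.uIcc a b, HasDerivAt (fun t => (y t)^2) (2 * y x * deriv y x) x := by
      intro x _
      have := ((hy.differentiable one_ne_zero x).hasDerivAt).pow 2
      simpa [pow_one, Pi.pow_def] using this
    have := intervalIntegral.integral_mul_deriv_eq_deriv_mul
      (fun x _ => (hD.differentiable one_ne_zero x).hasDerivAt) hv
      (contD'.intervalIntegrable a b)
      (((continuous_const.mul hyc).mul hy'c).intervalIntegrable a b)
    rw [this, hya, hyb]
    ring
  -- splitting the integral of φ
  have hquadsplit : ∫ x in a..b, (fyy f x 0 0 * (y x)^2 + fyz f x 0 0 * (2 * y x * deriv y x)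
        + fzz f x 0 0 * (deriv y x)^2)/2
      = ((∫ x in a..b, fyy f x 0 0 * (y x)^2) + (∫ x in a..b, fyz f x 0 0 * (2 * y x * deriv y x))
        + (∫ x in a..b, fzz f x 0 0 * (deriv y x)^2))/2 := by
    rw [intervalIntegral.integral_div, intervalIntegral.integral_add
        (((contC.fun_mul (hyc.fun_pow 2)).fun_add contMix).intervalIntegrable a b)
        ((contE.fun_mul (hy'c.fun_pow 2)).intervalIntegrable a b),
      intervalIntegral.integral_add ((contC.fun_mul (hyc.fun_pow 2)).intervalIntegrable a b)
        (contMix.intervalIntegrable a b)]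
  have hφsplit : ∫ x in a..b, φ x
      = (∫ x in a..b, (fy f x 0 0 * y x + fz f x 0 0 * deriv y x))
        + (∫ x in a..b, (fyy f x 0 0 * (y x)^2 + fyz f x 0 0 * (2 * y x * deriv y x)
            + fzz f x 0 0 * (deriv y x)^2)/2)
        - η * (S1 + S2) := by
    rw [hφdef]
    rw [intervalIntegral.integral_sub ((contLin.fun_add contQuad).intervalIntegrable a b)
      (contEta.intervalIntegrable a b)]
    rw [intervalIntegral.integral_add (contLin.intervalIntegrable a b)
      (contQuad.intervalIntegrable a b)]
    rw [intervalIntegral.integral_const_mul, intervalIntegral.integral_add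
      ((hyc.fun_pow 2).intervalIntegrable a b) ((hy'c.fun_pow 2).intervalIntegrable a b)]
  -- the quadratic form bound
  have hCD : (∫ x in a..b, fyy f x 0 0 * (y x)^2)
      - (∫ x in a..b, deriv (fun t => fyz f t 0 0) x * (y x)^2)
      = ∫ x in a..b, (fyy f x 0 0 - deriv (fun t => fyz f t 0 0) x) * (y x)^2 := by
    rw [← intervalIntegral.integral_sub ((contC.fun_mul (hyc.fun_pow 2)).intervalIntegrable a b)
      ((contD'.fun_mul (hyc.fun_pow 2)).intervalIntegrable a b)]
    apply intervalIntegral.integral_congr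
    intro x _; simp only; ring
  have hqbound : ∫ x in a..b, (fyy f x 0 0 - deriv (fun t => fyz f t 0 0) x) * (y x)^2
      ≥ q * S1 := by
    rw [hS1d, ← intervalIntegral.integral_const_mul]
    apply intervalIntegral.integral_mono_on hab.le
      ((continuous_const.mul (hyc.pow 2)).intervalIntegrable a b)
      (((contC.sub contD').mul (hyc.pow 2)).intervalIntegrable a b)
    intro x hx
    exact mul_le_mul_of_nonneg_right (hq.2 ⟨x, hx, rfl⟩) (sq_nonneg _)
  have hpbound : ∫ x in a..b, fzz f x 0 0 * (deriv y x)^2 ≥ p * S2 := by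
    rw [hS2d, ← intervalIntegral.integral_const_mul]
    apply intervalIntegral.integral_mono_on hab.le
      ((continuous_const.mul (hy'c.pow 2)).intervalIntegrable a b)
      ((contE.mul (hy'c.pow 2)).intervalIntegrable a b)
    intro x hx
    exact mul_le_mul_of_nonneg_right (hp.2 ⟨x, hx, rfl⟩) (sq_nonneg _)
  -- put everything together
  have hkey : ∫ x in a..b, φ x ≥ p/2 * S2 - η * (S1 + S2) := by
    rw [hφsplit, hLint, hquadsplit, hDint]
    have hq1 : 0 ≤ q * S1 := mul_nonneg hqnonneg hS1nn
    linarith [hCD, hqbound, hpbound, hq1]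
  -- final arithmetic
  rw [hPhidiff, hH1]
  have hre : (r + η) * (1 + K) = p/2 := by
    rw [hηdef]
    field_simp
    ring
  have hprod : (r + η) * (S1 + S2) ≤ (r + η) * (S2 + K * S2) := by
    apply mul_le_mul_of_nonneg_left _ (by linarith [hη0, hr0])
    linarith [hPoin]
  have hps : (r + η) * (S2 + K * S2) = p/2 * S2 := by
    rw [show S2 + K * S2 = (1 + K) * S2 by ring, ← mul_assoc, hre]
  clear_value S1 S2 K r η L
  linarith [hmono, hkey, hprod, hps]
end

section
/- Suppose y₀ satisfies the Euler–Lagrange equation f_y(x, y₀(x), y₀'(x)) − (d/dx)[f_z(x, y₀(x), y₀'(x))] = 0 for all x ∈ [a,b]. If p > 0 and q ≥ 0, then there exists ε > 0 such that for every y ∈ C¹[a,b] with y(a)=y₀(a), y(b)=y₀(b) and max_{x∈[a,b]} max(|y(x)−y₀(x)|, |y'(x)−y₀'(x)|) < ε one has Φ(y) − Φ(y₀) ≥ (π²·p / (2(π² + 16(b−a)²)))·‖y − y₀‖²_{H¹[a,b]}. -/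
open Set MeasureTheory intervalIntegral

lemma lineDeriv2 (F : ℝ×ℝ×ℝ → ℝ) {x y z : ℝ} (hF : DifferentiableAt ℝ F (x,y,z)) :
    HasDerivAt (fun u => F (x,u,z)) (fderiv ℝ F (x,y,z) (0,1,0)) y := by
  have h1 : HasDerivAt (fun u : ℝ => ((x,u,z) : ℝ×ℝ×ℝ)) (0,1,0) y :=
    (hasDerivAt_const y x).prodMk ((hasDerivAt_id y).prodMk (hasDerivAt_const y z))
  exact hF.hasFDerivAt.comp_hasDerivAt y h1

lemma lineDeriv3 (F : ℝ×ℝ×ℝ → ℝ) {x y z : ℝ} (hF : DifferentiableAt ℝ F (x,y,z)) :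
    HasDerivAt (fun u => F (x,y,u)) (fderiv ℝ F (x,y,z) (0,0,1)) z := by
  have h1 : HasDerivAt (fun u : ℝ => ((x,y,u) : ℝ×ℝ×ℝ)) (0,0,1) z :=
    (hasDerivAt_const z x).prodMk ((hasDerivAt_const z y).prodMk (hasDerivAt_id z))
  exact hF.hasFDerivAt.comp_hasDerivAt z h1

variable (f : ℝ → ℝ → ℝ → ℝ)

lemma fy_eq_s9 (hf : Differentiable ℝ (fun pt : ℝ×ℝ×ℝ => f pt.1 pt.2.1 pt.2.2)) (x y z : ℝ) :
    fy f x y z = fderiv ℝ (fun pt : ℝ×ℝ×ℝ => f pt.1 pt.2.1 pt.2.2) (x,y,z) (0,1,0) := by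
  have h := (lineDeriv2 (fun pt : ℝ×ℝ×ℝ => f pt.1 pt.2.1 pt.2.2) (hf (x,y,z))).deriv
  exact h ▸ rfl

lemma fz_eq_s9 (hf : Differentiable ℝ (fun pt : ℝ×ℝ×ℝ => f pt.1 pt.2.1 pt.2.2)) (x y z : ℝ) :
    fz f x y z = fderiv ℝ (fun pt : ℝ×ℝ×ℝ => f pt.1 pt.2.1 pt.2.2) (x,y,z) (0,0,1) := by
  have h := (lineDeriv3 (fun pt : ℝ×ℝ×ℝ => f pt.1 pt.2.1 pt.2.2) (hf (x,y,z))).deriv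
  exact h ▸ rfl

lemma fyy_eq_s9 (hf : ContDiff ℝ 2 (fun pt : ℝ×ℝ×ℝ => f pt.1 pt.2.1 pt.2.2)) (x y z : ℝ) :
    fyy f x y z = fderiv ℝ (fun q => fderiv ℝ (fun pt : ℝ×ℝ×ℝ => f pt.1 pt.2.1 pt.2.2) q (0,1,0)) (x,y,z) (0,1,0) := by
  set F := (fun pt : ℝ×ℝ×ℝ => f pt.1 pt.2.1 pt.2.2)
  have hFy : ContDiff ℝ 1 (fun q => fderiv ℝ F q (0,1,0)) :=
    (hf.fderiv_right (by norm_num)).clm_apply contDiff_const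
  have h1 : (fun u => fy f x u z) = (fun u => fderiv ℝ F (x,u,z) (0,1,0)) := by
    funext u; exact fy_eq_s9 f (hf.differentiable (by norm_num)) x u z
  have h := (lineDeriv2 (fun q => fderiv ℝ F q (0,1,0)) (x := x) (y := y) (z := z)
    (hFy.differentiable one_ne_zero _)).deriv
  rw [fyy, h1, h]

lemma fyz_eq_s9 (hf : ContDiff ℝ 2 (fun pt : ℝ×ℝ×ℝ => f pt.1 pt.2.1 pt.2.2)) (x y z : ℝ) :
    fyz f x y z = fderiv ℝ (fun q => fderiv ℝ (fun pt : ℝ×ℝ×ℝ => f pt.1 pt.2.1 pt.2.2) q (0,0,1)) (x,y,z) (0,1,0) := by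
  set F := (fun pt : ℝ×ℝ×ℝ => f pt.1 pt.2.1 pt.2.2)
  have hFz : ContDiff ℝ 1 (fun q => fderiv ℝ F q (0,0,1)) :=
    (hf.fderiv_right (by norm_num)).clm_apply contDiff_const
  have h1 : (fun u => fz f x u z) = (fun u => fderiv ℝ F (x,u,z) (0,0,1)) := by
    funext u; exact fz_eq_s9 f (hf.differentiable (by norm_num)) x u z
  have h := (lineDeriv2 (fun q => fderiv ℝ F q (0,0,1)) (x := x) (y := y) (z := z)
    (hFz.differentiable one_ne_zero _)).deriv
  rw [fyz, h1, h]

lemma fzz_eq_s9 (hf : ContDiff ℝ 2 (fun pt : ℝ×ℝ×ℝ => f pt.1 pt.2.1 pt.2.2)) (x y z : ℝ) :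
    fzz f x y z = fderiv ℝ (fun q => fderiv ℝ (fun pt : ℝ×ℝ×ℝ => f pt.1 pt.2.1 pt.2.2) q (0,0,1)) (x,y,z) (0,0,1) := by
  set F := (fun pt : ℝ×ℝ×ℝ => f pt.1 pt.2.1 pt.2.2)
  have hFz : ContDiff ℝ 1 (fun q => fderiv ℝ F q (0,0,1)) :=
    (hf.fderiv_right (by norm_num)).clm_apply contDiff_const
  have h1 : (fun u => fz f x y u) = (fun u => fderiv ℝ F (x,y,u) (0,0,1)) := by
    funext u; exact fz_eq_s9 f (hf.differentiable (by norm_num)) x y u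
  have h := (lineDeriv3 (fun q => fderiv ℝ F q (0,0,1)) (x := x) (y := y) (z := z)
    (hFz.differentiable one_ne_zero _)).deriv
  rw [fzz, h1, h]

lemma fderiv_clm_apply_eq (F : ℝ×ℝ×ℝ → ℝ) (hF : ContDiff ℝ 2 F) (pt v w : ℝ×ℝ×ℝ) :
    fderiv ℝ (fun q => fderiv ℝ F q v) pt w = fderiv ℝ (fderiv ℝ F) pt w v := by
  have hC1 : ContDiff ℝ 1 (fderiv ℝ F) := hF.fderiv_right (by norm_num)
  have hd : HasFDerivAt (fderiv ℝ F) (fderiv ℝ (fderiv ℝ F) pt) pt :=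
    (hC1.differentiable one_ne_zero pt).hasFDerivAt
  have h : HasFDerivAt (fun q => (ContinuousLinearMap.apply ℝ ℝ v) (fderiv ℝ F q))
      ((ContinuousLinearMap.apply ℝ ℝ v).comp (fderiv ℝ (fderiv ℝ F) pt)) pt :=
    (ContinuousLinearMap.apply ℝ ℝ v).hasFDerivAt.comp pt hd
  have := h.fderiv
  simp only [ContinuousLinearMap.apply_apply] at this
  rw [this]; rfl

lemma snd_symm (F : ℝ×ℝ×ℝ → ℝ) (hF : ContDiff ℝ 2 F) (pt v w : ℝ×ℝ×ℝ) :
    fderiv ℝ (fderiv ℝ F) pt v w = fderiv ℝ (fderiv ℝ F) pt w v := by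
  have hC1 : ContDiff ℝ 1 (fderiv ℝ F) := hF.fderiv_right (by norm_num)
  exact second_derivative_symmetric
    (fun y => (hF.differentiable (by norm_num) y).hasFDerivAt)
    ((hC1.differentiable one_ne_zero pt).hasFDerivAt) v w

lemma taylor_bound (h h' h'' : ℝ → ℝ)
    (hd1 : ∀ t, HasDerivAt h (h' t) t) (hd2 : ∀ t, HasDerivAt h' (h'' t) t)
    (hc : Continuous h'') (c : ℝ) (hc0 : 0 ≤ c)
    (hbound : ∀ t ∈ Set.Icc (0:ℝ) 1, |h'' t - h'' 0| ≤ c) :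
    h 1 - h 0 - h' 0 - (1/2) * h'' 0 ≥ -c := by
  have hcont' : Continuous h' := by
    have : Differentiable ℝ h' := fun t => (hd2 t).differentiableAt
    exact this.continuous
  have hint' : ∀ s t : ℝ, IntervalIntegrable h' volume s t :=
    fun s t => hcont'.intervalIntegrable s t
  have hint'' : ∀ s t : ℝ, IntervalIntegrable h'' volume s t :=
    fun s t => hc.intervalIntegrable s t
  have H1 : h 1 - h 0 = ∫ t in (0:ℝ)..1, h' t :=
    (intervalIntegral.integral_eq_sub_of_hasDerivAt (fun t _ => hd1 t) (hint' 0 1)).symm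
  have H2 : ∀ t : ℝ, h' t - h' 0 = ∫ s in (0:ℝ)..t, h'' s := fun t =>
    (intervalIntegral.integral_eq_sub_of_hasDerivAt (fun s _ => hd2 s) (hint'' 0 t)).symm
  -- pointwise lower bound on [0,1]
  have key : ∀ t ∈ Set.Icc (0:ℝ) 1, h' 0 + t * h'' 0 - c ≤ h' t := by
    intro t ht
    have h2 := H2 t
    have : |(∫ s in (0:ℝ)..t, h'' s) - t * h'' 0| ≤ c * t := by
      have e : (∫ s in (0:ℝ)..t, h'' s) - t * h'' 0
          = ∫ s in (0:ℝ)..t, (h'' s - h'' 0) := by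
        rw [intervalIntegral.integral_sub (hint'' 0 t) (intervalIntegrable_const)]
        simp [mul_comm]
      rw [e]
      calc |∫ s in (0:ℝ)..t, (h'' s - h'' 0)| ≤ ∫ s in (0:ℝ)..t, |h'' s - h'' 0| := by
            apply intervalIntegral.abs_integral_le_integral_abs ht.1
        _ ≤ ∫ s in (0:ℝ)..t, c := by
            apply intervalIntegral.integral_mono_on ht.1
              ((hc.sub continuous_const).abs.intervalIntegrable 0 t) intervalIntegrable_const
            intro s hs; exact hbound s ⟨hs.1, le_trans hs.2 ht.2⟩
        _ = c * t := by simp [mul_comm]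
    have hct : c * t ≤ c := by nlinarith [ht.1, ht.2]
    have := abs_le.mp this
    nlinarith [this.1, h2]
  -- integrate
  have hI : (∫ t in (0:ℝ)..1, (h' 0 + t * h'' 0 - c)) ≤ ∫ t in (0:ℝ)..1, h' t := by
    apply intervalIntegral.integral_mono_on (by norm_num)
      (by apply Continuous.intervalIntegrable; continuity) (hint' 0 1)
    exact key
  have hval : (∫ t in (0:ℝ)..1, (h' 0 + t * h'' 0 - c)) = h' 0 + (1/2) * h'' 0 - c := by
    have : (∫ t in (0:ℝ)..1, (h' 0 + t * h'' 0 - c))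
        = (∫ t in (0:ℝ)..1, (h' 0 - c)) + (∫ t in (0:ℝ)..1, t) * h'' 0 := by
      rw [← intervalIntegral.integral_mul_const, ← intervalIntegral.integral_add
        intervalIntegrable_const (by apply Continuous.intervalIntegrable; continuity)]
      congr 1; funext t; ring
    rw [this, integral_id]; simp; ring
  linarith [H1 ▸ hI, hval ▸ hI]

lemma poincare_s9 (a b : ℝ) (hab : a ≤ b) (u u' : ℝ → ℝ)
    (hu : ∀ x, HasDerivAt u (u' x) x) (hc : Continuous u') (ha : u a = 0) :
    ∫ x in a..b, (u x)^2 ≤ (b-a)^2 * ∫ x in a..b, (u' x)^2 := by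
  have hint : ∀ s t : ℝ, IntervalIntegrable u' volume s t := fun s t => hc.intervalIntegrable s t
  have hint2 : ∀ s t : ℝ, IntervalIntegrable (fun x => (u' x)^2) volume s t :=
    fun s t => (hc.pow 2).intervalIntegrable s t
  have hudiff : Differentiable ℝ u := fun x => (hu x).differentiableAt
  have hucont : Continuous u := hudiff.continuous
  have hFTC : ∀ x : ℝ, u x = ∫ t in a..x, u' t := by
    intro x
    have := intervalIntegral.integral_eq_sub_of_hasDerivAt (fun t _ => hu t) (hint a x)
    rw [this, ha, sub_zero]
  set G : ℝ → ℝ := fun s => (s - a) * (∫ t in a..s, (u' t)^2) - (∫ t in a..s, u' t)^2 with hG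
  have hD : ∀ s : ℝ, HasDerivAt G
      ((∫ t in a..s, (u' t)^2) + (s - a) * (u' s)^2 - 2 * (∫ t in a..s, u' t) * u' s) s := by
    intro s
    have h1 : HasDerivAt (fun s => ∫ t in a..s, (u' t)^2) ((u' s)^2) s :=
      intervalIntegral.integral_hasDerivAt_right (hint2 a s)
        ((hc.pow 2).stronglyMeasurableAtFilter _ _) (hc.pow 2).continuousAt
    have h2 : HasDerivAt (fun s => ∫ t in a..s, u' t) (u' s) s :=
      intervalIntegral.integral_hasDerivAt_right (hint a s)
        (hc.stronglyMeasurableAtFilter _ _) hc.continuousAt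
    have h3 : HasDerivAt (fun s : ℝ => s - a) 1 s := (hasDerivAt_id s).sub_const a
    have h4 := (h3.mul h1).sub (h2.pow 2)
    refine h4.congr_deriv ?_
    norm_num
  have hDnn : ∀ s ∈ Set.Icc a b, 0 ≤ (∫ t in a..s, (u' t)^2) + (s - a) * (u' s)^2
      - 2 * (∫ t in a..s, u' t) * u' s := by
    intro s hs
    have e : (∫ t in a..s, (u' t - u' s)^2)
        = (∫ t in a..s, (u' t)^2) - 2 * u' s * (∫ t in a..s, u' t) + (s-a) * (u' s)^2 := by
      have h5 : ∀ t, (u' t - u' s)^2 = (u' t)^2 - (2 * u' s) * u' t + (u' s)^2 :=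
        fun t => by ring
      simp_rw [h5]
      rw [intervalIntegral.integral_add ((hint2 a s).sub
          (Continuous.intervalIntegrable (by continuity) a s)) intervalIntegrable_const,
        intervalIntegral.integral_sub (hint2 a s)
          (Continuous.intervalIntegrable (by continuity) a s),
        intervalIntegral.integral_const_mul, intervalIntegral.integral_const]
      simp [smul_eq_mul]
    have nn : 0 ≤ ∫ t in a..s, (u' t - u' s)^2 :=
      intervalIntegral.integral_nonneg hs.1 (fun t _ => sq_nonneg _)
    rw [e] at nn; linarith
  have hGmono : MonotoneOn G (Set.Icc a b) := by
    have hGdiff : Differentiable ℝ G := fun x => (hD x).differentiableAt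
    apply monotoneOn_of_deriv_nonneg (convex_Icc a b)
      (hGdiff.continuous.continuousOn)
      (fun x _ => (hGdiff x).differentiableWithinAt)
    intro x hx
    rw [(hD x).deriv]
    exact hDnn x (Set.mem_Icc_of_Ioo (by simpa using hx))
  have hGa : G a = 0 := by simp [hG]
  have hCS : ∀ x ∈ Set.Icc a b, (u x)^2 ≤ (b - a) * ∫ t in a..b, (u' t)^2 := by
    intro x hx
    have hGx : 0 ≤ G x := hGa ▸ hGmono (Set.left_mem_Icc.2 hab) hx hx.1
    have h6 : (∫ t in a..x, (u' t)^2) ≤ ∫ t in a..b, (u' t)^2 := by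
      rw [← intervalIntegral.integral_add_adjacent_intervals (hint2 a x) (hint2 x b)]
      have : 0 ≤ ∫ t in x..b, (u' t)^2 :=
        intervalIntegral.integral_nonneg hx.2 (fun t _ => sq_nonneg _)
      linarith
    have h7 : 0 ≤ ∫ t in a..x, (u' t)^2 :=
      intervalIntegral.integral_nonneg hx.1 (fun t _ => sq_nonneg _)
    have h8 : 0 ≤ ∫ t in a..b, (u' t)^2 :=
      intervalIntegral.integral_nonneg hab (fun t _ => sq_nonneg _)
    have : (u x)^2 ≤ (x - a) * ∫ t in a..x, (u' t)^2 := by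
      rw [hFTC x]; simp only [hG] at hGx; nlinarith
    calc (u x)^2 ≤ (x - a) * ∫ t in a..x, (u' t)^2 := this
      _ ≤ (b - a) * ∫ t in a..b, (u' t)^2 := by nlinarith [hx.1, hx.2]
  calc (∫ x in a..b, (u x)^2) ≤ ∫ x in a..b, ((b - a) * ∫ t in a..b, (u' t)^2) := by
        apply intervalIntegral.integral_mono_on hab
          ((hucont.pow 2).intervalIntegrable a b) intervalIntegrable_const hCS
    _ = (b-a)^2 * ∫ x in a..b, (u' x)^2 := by
        rw [intervalIntegral.integral_const]; simp [smul_eq_mul]; ring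


noncomputable def FF (f : ℝ → ℝ → ℝ → ℝ) : ℝ×ℝ×ℝ → ℝ := fun pt => f pt.1 pt.2.1 pt.2.2
noncomputable def pdY (G : ℝ×ℝ×ℝ → ℝ) (q : ℝ×ℝ×ℝ) : ℝ := fderiv ℝ G q (0,1,0)
noncomputable def pdZ (G : ℝ×ℝ×ℝ → ℝ) (q : ℝ×ℝ×ℝ) : ℝ := fderiv ℝ G q (0,0,1)

lemma pdY_contDiff (G : ℝ×ℝ×ℝ → ℝ) (hG : ContDiff ℝ 2 G) : ContDiff ℝ 1 (pdY G) :=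
  (hG.fderiv_right (by norm_num)).clm_apply contDiff_const
lemma pdZ_contDiff (G : ℝ×ℝ×ℝ → ℝ) (hG : ContDiff ℝ 2 G) : ContDiff ℝ 1 (pdZ G) :=
  (hG.fderiv_right (by norm_num)).clm_apply contDiff_const
lemma pdY_cont (G : ℝ×ℝ×ℝ → ℝ) (hG : ContDiff ℝ 1 G) : Continuous (pdY G) :=
  ((ContinuousLinearMap.apply ℝ ℝ ((0,1,0) : ℝ×ℝ×ℝ)).continuous).comp
    (hG.continuous_fderiv one_ne_zero)
lemma pdZ_cont (G : ℝ×ℝ×ℝ → ℝ) (hG : ContDiff ℝ 1 G) : Continuous (pdZ G) :=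
  ((ContinuousLinearMap.apply ℝ ℝ ((0,0,1) : ℝ×ℝ×ℝ)).continuous).comp
    (hG.continuous_fderiv one_ne_zero)
lemma fderiv_dir_decomp (Φ : ℝ×ℝ×ℝ → ℝ) (q : ℝ×ℝ×ℝ) (hΦ : DifferentiableAt ℝ Φ q) (U W : ℝ) :
    fderiv ℝ Φ q (0,U,W) = U * fderiv ℝ Φ q (0,1,0) + W * fderiv ℝ Φ q (0,0,1) := by
  have : ((0,U,W) : ℝ×ℝ×ℝ) = U • ((0,1,0) : ℝ×ℝ×ℝ) + W • ((0,0,1) : ℝ×ℝ×ℝ) := by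
    simp [Prod.ext_iff]
  rw [this, map_add, (fderiv ℝ Φ q).map_smul, (fderiv ℝ Φ q).map_smul]; simp

lemma curve_taylor (F : ℝ×ℝ×ℝ → ℝ) (hF : ContDiff ℝ 2 F) (x Y V U W η : ℝ) (hη : 0 ≤ η)
    (hbA : ∀ t ∈ Set.Icc (0:ℝ) 1,
      |fderiv ℝ (fun q => fderiv ℝ F q (0,1,0)) (x, Y+t*U, V+t*W) (0,1,0)
        - fderiv ℝ (fun q => fderiv ℝ F q (0,1,0)) (x,Y,V) (0,1,0)| ≤ η)
    (hbBz : ∀ t ∈ Set.Icc (0:ℝ) 1,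
      |fderiv ℝ (fun q => fderiv ℝ F q (0,1,0)) (x, Y+t*U, V+t*W) (0,0,1)
        - fderiv ℝ (fun q => fderiv ℝ F q (0,1,0)) (x,Y,V) (0,0,1)| ≤ η)
    (hbB : ∀ t ∈ Set.Icc (0:ℝ) 1,
      |fderiv ℝ (fun q => fderiv ℝ F q (0,0,1)) (x, Y+t*U, V+t*W) (0,1,0)
        - fderiv ℝ (fun q => fderiv ℝ F q (0,0,1)) (x,Y,V) (0,1,0)| ≤ η)
    (hbC : ∀ t ∈ Set.Icc (0:ℝ) 1,
      |fderiv ℝ (fun q => fderiv ℝ F q (0,0,1)) (x, Y+t*U, V+t*W) (0,0,1)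
        - fderiv ℝ (fun q => fderiv ℝ F q (0,0,1)) (x,Y,V) (0,0,1)| ≤ η) :
    F (x, Y+U, V+W) - F (x,Y,V)
      - (fderiv ℝ F (x,Y,V) (0,1,0) * U + fderiv ℝ F (x,Y,V) (0,0,1) * W)
      - (1/2) * (fderiv ℝ (fun q => fderiv ℝ F q (0,1,0)) (x,Y,V) (0,1,0) * U^2
         + (fderiv ℝ (fun q => fderiv ℝ F q (0,1,0)) (x,Y,V) (0,0,1)
            + fderiv ℝ (fun q => fderiv ℝ F q (0,0,1)) (x,Y,V) (0,1,0)) * (U*W)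
         + fderiv ℝ (fun q => fderiv ℝ F q (0,0,1)) (x,Y,V) (0,0,1) * W^2)
    ≥ -(2*η*U^2 + 2*η*W^2) := by
  set Fy : ℝ×ℝ×ℝ → ℝ := fun q => fderiv ℝ F q (0,1,0) with hFydef
  set Fz : ℝ×ℝ×ℝ → ℝ := fun q => fderiv ℝ F q (0,0,1) with hFzdef
  have hFd : Differentiable ℝ F := hF.differentiable (by norm_num)
  have hFyC1 : ContDiff ℝ 1 Fy := (hF.fderiv_right (by norm_num)).clm_apply contDiff_const
  have hFzC1 : ContDiff ℝ 1 Fz := (hF.fderiv_right (by norm_num)).clm_apply contDiff_const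
  set γ : ℝ → ℝ×ℝ×ℝ := fun t => (x, Y + t*U, V + t*W) with hγdef
  have hγd : ∀ t, HasDerivAt γ ((0,U,W) : ℝ×ℝ×ℝ) t := by
    intro t
    exact (hasDerivAt_const t x).prodMk
      (((hasDerivAt_mul_const U).const_add Y).prodMk ((hasDerivAt_mul_const W).const_add V))
  set A : ℝ×ℝ×ℝ → ℝ := fun q => fderiv ℝ Fy q (0,1,0) with hAdef
  set Bz : ℝ×ℝ×ℝ → ℝ := fun q => fderiv ℝ Fy q (0,0,1) with hBzdef
  set B : ℝ×ℝ×ℝ → ℝ := fun q => fderiv ℝ Fz q (0,1,0) with hBdef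
  set C : ℝ×ℝ×ℝ → ℝ := fun q => fderiv ℝ Fz q (0,0,1) with hCdef
  have hγc : Continuous γ := by
    have : Differentiable ℝ γ := fun t => (hγd t).differentiableAt
    exact this.continuous
  have hh1 : ∀ t, HasDerivAt (fun s => F (γ s)) (U * Fy (γ t) + W * Fz (γ t)) t := by
    intro t
    have h2 := (hFd (γ t)).hasFDerivAt.comp_hasDerivAt t (hγd t)
    rw [fderiv_dir_decomp F (γ t) (hFd (γ t)) U W] at h2
    exact h2
  have hh2 : ∀ t, HasDerivAt (fun s => U * Fy (γ s) + W * Fz (γ s))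
      (U * (U * A (γ t) + W * Bz (γ t)) + W * (U * B (γ t) + W * C (γ t))) t := by
    intro t
    have hy := ((hFyC1.differentiable one_ne_zero) (γ t)).hasFDerivAt.comp_hasDerivAt t (hγd t)
    rw [fderiv_dir_decomp Fy (γ t) ((hFyC1.differentiable one_ne_zero) (γ t)) U W] at hy
    have hz := ((hFzC1.differentiable one_ne_zero) (γ t)).hasFDerivAt.comp_hasDerivAt t (hγd t)
    rw [fderiv_dir_decomp Fz (γ t) ((hFzC1.differentiable one_ne_zero) (γ t)) U W] at hz
    exact (hy.const_mul U).add (hz.const_mul W)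
  have hAc : Continuous (fun q => A q) := by
    exact ((ContinuousLinearMap.apply ℝ ℝ ((0,1,0) : ℝ×ℝ×ℝ)).continuous).comp
      (hFyC1.continuous_fderiv one_ne_zero)
  have hBzc : Continuous (fun q => Bz q) :=
    ((ContinuousLinearMap.apply ℝ ℝ ((0,0,1) : ℝ×ℝ×ℝ)).continuous).comp
      (hFyC1.continuous_fderiv one_ne_zero)
  have hBc : Continuous (fun q => B q) :=
    ((ContinuousLinearMap.apply ℝ ℝ ((0,1,0) : ℝ×ℝ×ℝ)).continuous).comp
      (hFzC1.continuous_fderiv one_ne_zero)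
  have hCc : Continuous (fun q => C q) :=
    ((ContinuousLinearMap.apply ℝ ℝ ((0,0,1) : ℝ×ℝ×ℝ)).continuous).comp
      (hFzC1.continuous_fderiv one_ne_zero)
  have hcont : Continuous (fun t => U * (U * A (γ t) + W * Bz (γ t))
      + W * (U * B (γ t) + W * C (γ t))) := by
    have := hAc.comp hγc; have := hBzc.comp hγc; have := hBc.comp hγc; have := hCc.comp hγc
    fun_prop
  have e0 : γ (0:ℝ) = (x,Y,V) := by simp [hγdef]
  have hb : ∀ t ∈ Set.Icc (0:ℝ) 1,
      |(U * (U * A (γ t) + W * Bz (γ t)) + W * (U * B (γ t) + W * C (γ t)))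
        - (U * (U * A (γ 0) + W * Bz (γ 0)) + W * (U * B (γ 0) + W * C (γ 0)))|
        ≤ 2*η*U^2 + 2*η*W^2 := by
    intro t ht
    have hA := hbA t ht; have hBz' := hbBz t ht; have hB' := hbB t ht; have hC' := hbC t ht
    rw [e0]
    have key : |U^2 * (A (γ t) - A (x,Y,V)) + (U*W) * (Bz (γ t) - Bz (x,Y,V))
        + (U*W) * (B (γ t) - B (x,Y,V)) + W^2 * (C (γ t) - C (x,Y,V))|
        ≤ 2*η*U^2 + 2*η*W^2 := by
      have h1 : |U^2 * (A (γ t) - A (x,Y,V))| ≤ U^2 * η := by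
        rw [abs_mul, abs_of_nonneg (sq_nonneg U)]
        exact mul_le_mul_of_nonneg_left hA (sq_nonneg U)
      have h2 : |(U*W) * (Bz (γ t) - Bz (x,Y,V))| ≤ |U*W| * η := by
        rw [abs_mul]; exact mul_le_mul_of_nonneg_left hBz' (abs_nonneg _)
      have h3 : |(U*W) * (B (γ t) - B (x,Y,V))| ≤ |U*W| * η := by
        rw [abs_mul]; exact mul_le_mul_of_nonneg_left hB' (abs_nonneg _)
      have h4 : |W^2 * (C (γ t) - C (x,Y,V))| ≤ W^2 * η := by
        rw [abs_mul, abs_of_nonneg (sq_nonneg W)]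
        exact mul_le_mul_of_nonneg_left hC' (sq_nonneg W)
      have habs : |U*W| ≤ (U^2 + W^2)/2 := by
        rw [abs_mul]
        nlinarith [sq_nonneg (|U| - |W|), sq_abs U, sq_abs W]
      calc |U^2 * (A (γ t) - A (x,Y,V)) + (U*W) * (Bz (γ t) - Bz (x,Y,V))
          + (U*W) * (B (γ t) - B (x,Y,V)) + W^2 * (C (γ t) - C (x,Y,V))|
          ≤ |U^2 * (A (γ t) - A (x,Y,V))| + |(U*W) * (Bz (γ t) - Bz (x,Y,V))|
            + |(U*W) * (B (γ t) - B (x,Y,V))| + |W^2 * (C (γ t) - C (x,Y,V))| := by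
            exact (abs_add_le _ _).trans (by
              gcongr
              exact (abs_add_le _ _).trans (by gcongr; exact abs_add_le _ _))
        _ ≤ 2*η*U^2 + 2*η*W^2 := by nlinarith
    have e : (U * (U * A (γ t) + W * Bz (γ t)) + W * (U * B (γ t) + W * C (γ t)))
        - (U * (U * A (x,Y,V) + W * Bz (x,Y,V)) + W * (U * B (x,Y,V) + W * C (x,Y,V)))
        = U^2 * (A (γ t) - A (x,Y,V)) + (U*W) * (Bz (γ t) - Bz (x,Y,V))
        + (U*W) * (B (γ t) - B (x,Y,V)) + W^2 * (C (γ t) - C (x,Y,V)) := by ring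
    rw [e]; exact key
  have hc0 : (0:ℝ) ≤ 2*η*U^2 + 2*η*W^2 := by positivity
  have main := taylor_bound (fun s => F (γ s)) (fun s => U * Fy (γ s) + W * Fz (γ s))
    (fun t => U * (U * A (γ t) + W * Bz (γ t)) + W * (U * B (γ t) + W * C (γ t)))
    hh1 hh2 hcont _ hc0 hb
  have e1 : γ (1:ℝ) = (x, Y+U, V+W) := by simp [hγdef]
  simp only [e0, e1] at main
  linarith

lemma pd_symm (G : ℝ×ℝ×ℝ → ℝ) (hG : ContDiff ℝ 2 G) (q : ℝ×ℝ×ℝ) :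
    pdZ (pdY G) q = pdY (pdZ G) q := by
  have h1 : pdZ (pdY G) q = fderiv ℝ (fderiv ℝ G) q (0,0,1) (0,1,0) :=
    fderiv_clm_apply_eq G hG q (0,1,0) (0,0,1)
  have h2 : pdY (pdZ G) q = fderiv ℝ (fderiv ℝ G) q (0,1,0) (0,0,1) :=
    fderiv_clm_apply_eq G hG q (0,0,1) (0,1,0)
  rw [h1, h2, snd_symm G hG]

variable {f : ℝ → ℝ → ℝ → ℝ}

lemma fyI (hf : ContDiff ℝ 2 (FF f)) (x y z : ℝ) : fy f x y z = pdY (FF f) (x,y,z) :=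
  fy_eq_s9 f (hf.differentiable (by norm_num)) x y z
lemma fzI (hf : ContDiff ℝ 2 (FF f)) (x y z : ℝ) : fz f x y z = pdZ (FF f) (x,y,z) :=
  fz_eq_s9 f (hf.differentiable (by norm_num)) x y z
lemma fyyI (hf : ContDiff ℝ 2 (FF f)) (x y z : ℝ) : fyy f x y z = pdY (pdY (FF f)) (x,y,z) :=
  fyy_eq_s9 f hf x y z
lemma fyzI (hf : ContDiff ℝ 2 (FF f)) (x y z : ℝ) : fyz f x y z = pdY (pdZ (FF f)) (x,y,z) :=
  fyz_eq_s9 f hf x y z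
lemma fzzI (hf : ContDiff ℝ 2 (FF f)) (x y z : ℝ) : fzz f x y z = pdZ (pdZ (FF f)) (x,y,z) :=
  fzz_eq_s9 f hf x y z

lemma curve_taylor' (F : ℝ×ℝ×ℝ → ℝ) (hF : ContDiff ℝ 2 F) (x Y V U W η : ℝ) (hη : 0 ≤ η)
    (hbA : ∀ t ∈ Set.Icc (0:ℝ) 1,
      |pdY (pdY F) (x, Y+t*U, V+t*W) - pdY (pdY F) (x,Y,V)| ≤ η)
    (hbBz : ∀ t ∈ Set.Icc (0:ℝ) 1,
      |pdZ (pdY F) (x, Y+t*U, V+t*W) - pdZ (pdY F) (x,Y,V)| ≤ η)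
    (hbB : ∀ t ∈ Set.Icc (0:ℝ) 1,
      |pdY (pdZ F) (x, Y+t*U, V+t*W) - pdY (pdZ F) (x,Y,V)| ≤ η)
    (hbC : ∀ t ∈ Set.Icc (0:ℝ) 1,
      |pdZ (pdZ F) (x, Y+t*U, V+t*W) - pdZ (pdZ F) (x,Y,V)| ≤ η) :
    F (x, Y+U, V+W) - F (x,Y,V)
      - (pdY F (x,Y,V) * U + pdZ F (x,Y,V) * W)
      - (1/2) * (pdY (pdY F) (x,Y,V) * U^2
         + (pdZ (pdY F) (x,Y,V) + pdY (pdZ F) (x,Y,V)) * (U*W)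
         + pdZ (pdZ F) (x,Y,V) * W^2)
    ≥ -(2*η*U^2 + 2*η*W^2) :=
  curve_taylor F hF x Y V U W η hη hbA hbBz hbB hbC

lemma unif_bound (g : ℝ×ℝ×ℝ → ℝ) (hg : Continuous g) (K : Set (ℝ×ℝ×ℝ)) (hK : IsCompact K)
    (η : ℝ) (hη : 0 < η) :
    ∃ δ > 0, ∀ r ∈ K, ∀ s ∈ K, dist r s < δ → |g r - g s| ≤ η := by
  have h := hK.uniformContinuousOn_of_continuous hg.continuousOn
  rw [Metric.uniformContinuousOn_iff] at h
  obtain ⟨δ, hδ, h⟩ := h η hη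
  exact ⟨δ, hδ, fun r hr s hs hd => le_of_lt (by simpa [Real.dist_eq] using h r hr s hs hd)⟩

set_option maxHeartbeats 1600000 in
theorem statement9
    (a b : ℝ) (hab : a < b)
    (f : ℝ → ℝ → ℝ → ℝ)
    (hf : ContDiff ℝ 2 (fun pt : ℝ × ℝ × ℝ => f pt.1 pt.2.1 pt.2.2))
    (hfyz : ContDiff ℝ 1 (fun pt : ℝ × ℝ × ℝ => fyz f pt.1 pt.2.1 pt.2.2))
    (y₀ : ℝ → ℝ) (hy₀ : ContDiff ℝ 2 y₀)
    (hEL : ∀ x ∈ Set.Icc a b,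
      fy f x (y₀ x) (deriv y₀ x) - deriv (fun t => fz f t (y₀ t) (deriv y₀ t)) x = 0)
    (p q : ℝ)
    (hp : IsLeast ((fun x => fzz f x (y₀ x) (deriv y₀ x)) '' Set.Icc a b) p)
    (hq : IsLeast ((fun x => fyy f x (y₀ x) (deriv y₀ x)
            - deriv (fun t => fyz f t (y₀ t) (deriv y₀ t)) x) '' Set.Icc a b) q)
    (hppos : 0 < p) (hqnonneg : 0 ≤ q) :
    ∃ ε > 0, ∀ y : ℝ → ℝ, ContDiff ℝ 1 y → y a = y₀ a → y b = y₀ b →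
      (∀ x ∈ Set.Icc a b, max |y x - y₀ x| |deriv y x - deriv y₀ x| < ε) →
      Phi f a b y - Phi f a b y₀ ≥
        Real.pi ^ 2 * p / (2 * (Real.pi ^ 2 + 16 * (b - a) ^ 2)) *
          H1normSq a b (fun x => y x - y₀ x) := by
  have hfF : ContDiff ℝ 2 (FF f) := hf
  have hFd : Differentiable ℝ (FF f) := hfF.differentiable (by norm_num)
  have hFyC1 : ContDiff ℝ 1 (pdY (FF f)) := pdY_contDiff _ hfF
  have hFzC1 : ContDiff ℝ 1 (pdZ (FF f)) := pdZ_contDiff _ hfF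
  have hA2c : Continuous (pdY (pdY (FF f))) := pdY_cont _ hFyC1
  have hBz2c : Continuous (pdZ (pdY (FF f))) := pdZ_cont _ hFyC1
  have hB2c : Continuous (pdY (pdZ (FF f))) := pdY_cont _ hFzC1
  have hC2c : Continuous (pdZ (pdZ (FF f))) := pdZ_cont _ hFzC1
  have hB2C1 : ContDiff ℝ 1 (pdY (pdZ (FF f))) := by
    have he : (fun pt : ℝ×ℝ×ℝ => fyz f pt.1 pt.2.1 pt.2.2)
        = (fun pt : ℝ×ℝ×ℝ => pdY (pdZ (FF f)) (pt.1, pt.2.1, pt.2.2)) :=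
      funext fun pt => fyzI hfF pt.1 pt.2.1 pt.2.2
    have := he ▸ hfyz
    exact this
  have hy₀d : Differentiable ℝ y₀ := hy₀.differentiable (by norm_num)
  have hVC1 : ContDiff ℝ 1 (deriv y₀) := by
    have h2 : (2 : WithTop ℕ∞) = 1 + 1 := by norm_num
    exact (contDiff_succ_iff_deriv.mp (h2 ▸ hy₀)).2.2
  have hVd : Differentiable ℝ (deriv y₀) := hVC1.differentiable one_ne_zero
  have hV'c : Continuous (deriv (deriv y₀)) := hVC1.continuous_deriv le_rfl
  have hcc : Continuous (fun x => ((x, y₀ x, deriv y₀ x) : ℝ×ℝ×ℝ)) :=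
    continuous_id.prodMk (hy₀.continuous.prodMk hVC1.continuous)
  -- constants
  have hd0 : 0 < b - a := sub_pos.2 hab
  have hpi : Real.pi^2 < 16 := by nlinarith [Real.pi_lt_d2, Real.pi_pos]
  have hden : 0 < Real.pi^2 + 16*(b-a)^2 := by positivity
  set cst := Real.pi^2*p/(2*(Real.pi^2+16*(b-a)^2)) with hcstdef
  have hcst0 : 0 < cst := by rw [hcstdef]; positivity
  set κ := 1 + (b-a)^2 with hκdef
  have hκ0 : 0 < κ := by positivity
  have hslack : cst * κ < p/2 := by
    rw [hcstdef, hκdef, div_mul_eq_mul_div, div_lt_iff₀ (by positivity)]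
    have key : 0 < p * ((16 - Real.pi^2) * ((b-a)*(b-a))) :=
      mul_pos hppos (mul_pos (by linarith) (mul_pos hd0 hd0))
    nlinarith [key]
  set η := (p/2 - cst*κ)/(2*κ) with hηdef
  have hηpos : 0 < η := div_pos (by linarith) (by positivity)
  clear_value cst κ η
  -- compact box
  obtain ⟨R₁, hR₁⟩ := (isCompact_Icc (a := a) (b := b)).exists_bound_of_continuousOn
    hy₀.continuous.continuousOn
  obtain ⟨R₂, hR₂⟩ := (isCompact_Icc (a := a) (b := b)).exists_bound_of_continuousOn
    hVC1.continuous.continuousOn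
  set R := max R₁ R₂ with hRdef
  have hRy : ∀ x ∈ Set.Icc a b, |y₀ x| ≤ R ∧ |deriv y₀ x| ≤ R := by
    intro x hx
    constructor
    · exact le_trans (by simpa [Real.norm_eq_abs] using hR₁ x hx) (le_max_left _ _)
    · exact le_trans (by simpa [Real.norm_eq_abs] using hR₂ x hx) (le_max_right _ _)
  set K := Set.Icc a b ×ˢ Set.Icc (-(R+1)) (R+1) ×ˢ Set.Icc (-(R+1)) (R+1) with hKdef
  have hKc : IsCompact K := isCompact_Icc.prod (isCompact_Icc.prod isCompact_Icc)
  obtain ⟨δA, hδA0, hδA⟩ := unif_bound _ hA2c K hKc η hηpos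
  obtain ⟨δBz, hδBz0, hδBz⟩ := unif_bound _ hBz2c K hKc η hηpos
  obtain ⟨δB, hδB0, hδB⟩ := unif_bound _ hB2c K hKc η hηpos
  obtain ⟨δC, hδC0, hδC⟩ := unif_bound _ hC2c K hKc η hηpos
  set ε := min (min (min δA δBz) (min δB δC)) 1 with hεdef
  have hε0 : 0 < ε :=
    lt_min (lt_min (lt_min hδA0 hδBz0) (lt_min hδB0 hδC0)) one_pos
  have hε1 : ε ≤ 1 := min_le_right _ _
  have hεδA : ε ≤ δA := le_trans (min_le_left _ _) (le_trans (min_le_left _ _) (min_le_left _ _))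
  have hεδBz : ε ≤ δBz := le_trans (min_le_left _ _) (le_trans (min_le_left _ _) (min_le_right _ _))
  have hεδB : ε ≤ δB := le_trans (min_le_left _ _) (le_trans (min_le_right _ _) (min_le_left _ _))
  have hεδC : ε ≤ δC := le_trans (min_le_left _ _) (le_trans (min_le_right _ _) (min_le_right _ _))
  refine ⟨ε, hε0, ?_⟩
  intro y hy hya hyb hclose
  -- ============ the given competitor y ============
  have hyd : Differentiable ℝ y := hy.differentiable one_ne_zero
  have hy'c : Continuous (deriv y) := hy.continuous_deriv le_rfl
  set uu := fun x : ℝ => y x - y₀ x with huu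
  set vv := fun x : ℝ => deriv y x - deriv y₀ x with hvv
  have huuc : Continuous uu := hy.continuous.sub hy₀.continuous
  have hvvc : Continuous vv := hy'c.sub hVC1.continuous
  have hu : ∀ x, HasDerivAt uu (vv x) x :=
    fun x => (hyd x).hasDerivAt.sub (hy₀d x).hasDerivAt
  have huua : uu a = 0 := by simp [huu, hya]
  have huub : uu b = 0 := by simp [huu, hyb]
  have hclose' : ∀ x ∈ Set.Icc a b, |uu x| < ε ∧ |vv x| < ε := fun x hx =>
    ⟨lt_of_le_of_lt (le_max_left _ _) (hclose x hx),
     lt_of_le_of_lt (le_max_right _ _) (hclose x hx)⟩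
  -- curve coefficient functions
  set cY := fun x : ℝ => pdY (FF f) (x, y₀ x, deriv y₀ x) with hcY
  set cZ := fun x : ℝ => pdZ (FF f) (x, y₀ x, deriv y₀ x) with hcZ
  set cA := fun x : ℝ => pdY (pdY (FF f)) (x, y₀ x, deriv y₀ x) with hcA
  set cBz := fun x : ℝ => pdZ (pdY (FF f)) (x, y₀ x, deriv y₀ x) with hcBz
  set cB := fun x : ℝ => pdY (pdZ (FF f)) (x, y₀ x, deriv y₀ x) with hcB
  set cC := fun x : ℝ => pdZ (pdZ (FF f)) (x, y₀ x, deriv y₀ x) with hcC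
  set dB := fun x : ℝ => fderiv ℝ (pdY (pdZ (FF f))) (x, y₀ x, deriv y₀ x)
      (1, deriv y₀ x, deriv (deriv y₀) x) with hdB
  have hcYc : Continuous cY := (pdY_cont _ (hfF.of_le (by norm_num))).comp hcc
  have hcZc : Continuous cZ := (pdZ_cont _ (hfF.of_le (by norm_num))).comp hcc
  have hcAc : Continuous cA := hA2c.comp hcc
  have hcBzc : Continuous cBz := hBz2c.comp hcc
  have hcBc : Continuous cB := hB2c.comp hcc
  have hcCc : Continuous cC := hC2c.comp hcc
  have hc'c : Continuous (fun x => ((1, deriv y₀ x, deriv (deriv y₀) x) : ℝ×ℝ×ℝ)) :=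
    continuous_const.prodMk (hVC1.continuous.prodMk hV'c)
  have hdBc : Continuous dB :=
    Continuous.clm_apply ((hB2C1.continuous_fderiv one_ne_zero).comp hcc) hc'c
  -- membership in the box K and closeness of curve points
  have hmem0 : ∀ x ∈ Set.Icc a b, ((x, y₀ x, deriv y₀ x) : ℝ×ℝ×ℝ) ∈ K := by
    intro x hx
    refine Set.mem_prod.2 ⟨hx, Set.mem_prod.2 ⟨?_, ?_⟩⟩
    · have := (hRy x hx).1
      show y₀ x ∈ Set.Icc (-(R+1)) (R+1)
      rw [Set.mem_Icc]; rw [abs_le] at this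
      constructor <;> linarith
    · have := (hRy x hx).2
      show deriv y₀ x ∈ Set.Icc (-(R+1)) (R+1)
      rw [Set.mem_Icc]; rw [abs_le] at this
      constructor <;> linarith
  have hmem1 : ∀ x ∈ Set.Icc a b, ∀ t ∈ Set.Icc (0:ℝ) 1,
      ((x, y₀ x + t * uu x, deriv y₀ x + t * vv x) : ℝ×ℝ×ℝ) ∈ K := by
    intro x hx t ht
    have h1 := (hRy x hx).1
    have h2 := (hRy x hx).2
    have h3 := (hclose' x hx).1
    have h4 := (hclose' x hx).2
    have ht1 : |t| ≤ 1 := abs_le.2 ⟨by linarith [ht.1], ht.2⟩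
    have h5 : |t * uu x| ≤ |uu x| := by
      rw [abs_mul]
      calc |t| * |uu x| ≤ 1 * |uu x| := mul_le_mul_of_nonneg_right ht1 (abs_nonneg _)
        _ = |uu x| := one_mul _
    have h6 : |t * vv x| ≤ |vv x| := by
      rw [abs_mul]
      calc |t| * |vv x| ≤ 1 * |vv x| := mul_le_mul_of_nonneg_right ht1 (abs_nonneg _)
        _ = |vv x| := one_mul _
    refine Set.mem_prod.2 ⟨hx, Set.mem_prod.2 ⟨?_, ?_⟩⟩
    · show y₀ x + t * uu x ∈ Set.Icc (-(R+1)) (R+1)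
      rw [Set.mem_Icc]
      have h7 : |y₀ x + t * uu x| ≤ R + 1 := by
        calc |y₀ x + t * uu x| ≤ |y₀ x| + |t * uu x| := abs_add_le _ _
          _ ≤ R + 1 := by linarith [le_trans h5 (le_trans h3.le hε1)]
      rw [abs_le] at h7; exact ⟨by linarith [h7.1], h7.2⟩
    · show deriv y₀ x + t * vv x ∈ Set.Icc (-(R+1)) (R+1)
      rw [Set.mem_Icc]
      have h7 : |deriv y₀ x + t * vv x| ≤ R + 1 := by
        calc |deriv y₀ x + t * vv x| ≤ |deriv y₀ x| + |t * vv x| := abs_add_le _ _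
          _ ≤ R + 1 := by linarith [le_trans h6 (le_trans h4.le hε1)]
      rw [abs_le] at h7; exact ⟨by linarith [h7.1], h7.2⟩
  have hdist : ∀ x ∈ Set.Icc a b, ∀ t ∈ Set.Icc (0:ℝ) 1,
      dist ((x, y₀ x + t * uu x, deriv y₀ x + t * vv x) : ℝ×ℝ×ℝ)
        ((x, y₀ x, deriv y₀ x) : ℝ×ℝ×ℝ) < ε := by
    intro x hx t ht
    have h3 := (hclose' x hx).1
    have h4 := (hclose' x hx).2
    have ht1 : |t| ≤ 1 := abs_le.2 ⟨by linarith [ht.1], ht.2⟩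
    have h5 : |t * uu x| ≤ |uu x| := by
      rw [abs_mul]
      calc |t| * |uu x| ≤ 1 * |uu x| := mul_le_mul_of_nonneg_right ht1 (abs_nonneg _)
        _ = |uu x| := one_mul _
    have h6 : |t * vv x| ≤ |vv x| := by
      rw [abs_mul]
      calc |t| * |vv x| ≤ 1 * |vv x| := mul_le_mul_of_nonneg_right ht1 (abs_nonneg _)
        _ = |vv x| := one_mul _
    rw [Prod.dist_eq, Prod.dist_eq, dist_self]
    simp only [Real.dist_eq, add_sub_cancel_left]
    rw [max_eq_right (le_trans (abs_nonneg _) (le_max_left _ _))]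
    exact max_lt (lt_of_le_of_lt h5 h3) (lt_of_le_of_lt h6 h4)
  -- ============ pointwise Taylor estimate ============
  have master : ∀ x ∈ Set.Icc a b,
      f x (y x) (deriv y x) - f x (y₀ x) (deriv y₀ x)
        - (cY x * uu x + cZ x * vv x)
        - (1/2) * (cA x * (uu x)^2 + (cBz x + cB x) * (uu x * vv x) + cC x * (vv x)^2)
        ≥ -(2*η*(uu x)^2 + 2*η*(vv x)^2) := by
    intro x hx
    have hbA : ∀ t ∈ Set.Icc (0:ℝ) 1,
        |pdY (pdY (FF f)) (x, y₀ x + t * uu x, deriv y₀ x + t * vv x)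
          - pdY (pdY (FF f)) (x, y₀ x, deriv y₀ x)| ≤ η := fun t ht =>
      hδA _ (hmem1 x hx t ht) _ (hmem0 x hx) (lt_of_lt_of_le (hdist x hx t ht) hεδA)
    have hbBz : ∀ t ∈ Set.Icc (0:ℝ) 1,
        |pdZ (pdY (FF f)) (x, y₀ x + t * uu x, deriv y₀ x + t * vv x)
          - pdZ (pdY (FF f)) (x, y₀ x, deriv y₀ x)| ≤ η := fun t ht =>
      hδBz _ (hmem1 x hx t ht) _ (hmem0 x hx) (lt_of_lt_of_le (hdist x hx t ht) hεδBz)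
    have hbB : ∀ t ∈ Set.Icc (0:ℝ) 1,
        |pdY (pdZ (FF f)) (x, y₀ x + t * uu x, deriv y₀ x + t * vv x)
          - pdY (pdZ (FF f)) (x, y₀ x, deriv y₀ x)| ≤ η := fun t ht =>
      hδB _ (hmem1 x hx t ht) _ (hmem0 x hx) (lt_of_lt_of_le (hdist x hx t ht) hεδB)
    have hbC : ∀ t ∈ Set.Icc (0:ℝ) 1,
        |pdZ (pdZ (FF f)) (x, y₀ x + t * uu x, deriv y₀ x + t * vv x)
          - pdZ (pdZ (FF f)) (x, y₀ x, deriv y₀ x)| ≤ η := fun t ht =>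
      hδC _ (hmem1 x hx t ht) _ (hmem0 x hx) (lt_of_lt_of_le (hdist x hx t ht) hεδC)
    have hct := curve_taylor' (FF f) hfF x (y₀ x) (deriv y₀ x) (uu x) (vv x) η hηpos.le
      hbA hbBz hbB hbC
    have e1 : y₀ x + uu x = y x := by simp [huu]
    have e2 : deriv y₀ x + vv x = deriv y x := by simp [hvv]
    rw [e1, e2] at hct
    exact hct
  -- ============ integrability ============
  have intg0 : IntervalIntegrable (fun x => f x (y x) (deriv y x)) volume a b := by
    have hco : Continuous (fun x => f x (y x) (deriv y x)) :=
      hfF.continuous.comp (continuous_id.prodMk (hy.continuous.prodMk hy'c))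
    exact hco.intervalIntegrable a b
  have intg1 : IntervalIntegrable (fun x => f x (y₀ x) (deriv y₀ x)) volume a b := by
    have hco : Continuous (fun x => f x (y₀ x) (deriv y₀ x)) := hfF.continuous.comp hcc
    exact hco.intervalIntegrable a b
  have hLc : Continuous (fun x => cY x * uu x + cZ x * vv x) :=
    (hcYc.mul huuc).add (hcZc.mul hvvc)
  have intL : IntervalIntegrable (fun x => cY x * uu x + cZ x * vv x) volume a b :=
    hLc.intervalIntegrable a b
  have hQc : Continuous (fun x => cA x * (uu x)^2 + (cBz x + cB x) * (uu x * vv x)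
      + cC x * (vv x)^2) := by fun_prop
  have intQ : IntervalIntegrable (fun x => cA x * (uu x)^2 + (cBz x + cB x) * (uu x * vv x)
      + cC x * (vv x)^2) volume a b := hQc.intervalIntegrable a b
  have intu2 : IntervalIntegrable (fun x => (uu x)^2) volume a b :=
    (huuc.pow 2).intervalIntegrable a b
  have intv2 : IntervalIntegrable (fun x => (vv x)^2) volume a b :=
    (hvvc.pow 2).intervalIntegrable a b
  have intQA : IntervalIntegrable (fun x => (cA x - dB x) * (uu x)^2 + cC x * (vv x)^2)
      volume a b := (Continuous.intervalIntegrable (by fun_prop) a b)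
  -- ============ first variation vanishes ============
  have hcurved : ∀ x : ℝ, HasDerivAt (fun t => ((t, y₀ t, deriv y₀ t) : ℝ×ℝ×ℝ))
      ((1, deriv y₀ x, deriv (deriv y₀) x) : ℝ×ℝ×ℝ) x := fun x =>
    (hasDerivAt_id x).prodMk ((hy₀d x).hasDerivAt.prodMk (hVd x).hasDerivAt)
  have hQfd : ∀ x : ℝ, HasDerivAt (fun t => fz f t (y₀ t) (deriv y₀ t))
      (fderiv ℝ (pdZ (FF f)) (x, y₀ x, deriv y₀ x) (1, deriv y₀ x, deriv (deriv y₀) x)) x := by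
    intro x
    have h2 := ((hFzC1.differentiable one_ne_zero) _).hasFDerivAt.comp_hasDerivAt x (hcurved x)
    have heq : (fun t => fz f t (y₀ t) (deriv y₀ t))
        = fun t => pdZ (FF f) (t, y₀ t, deriv y₀ t) := funext fun t => fzI hfF t _ _
    rw [heq]; exact h2
  have hELval : ∀ x ∈ Set.Icc a b,
      fderiv ℝ (pdZ (FF f)) (x, y₀ x, deriv y₀ x) (1, deriv y₀ x, deriv (deriv y₀) x)
        = cY x := by
    intro x hx
    have h1 := hEL x hx
    have h2 := (hQfd x).deriv
    have h3 : fy f x (y₀ x) (deriv y₀ x) = cY x := fyI hfF x (y₀ x) (deriv y₀ x)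
    linarith [h1, h2, h3]
  have hLzero : (∫ x in a..b, (cY x * uu x + cZ x * vv x)) = 0 := by
    have hD : ∀ x ∈ Set.uIcc a b, HasDerivAt
        (fun t => fz f t (y₀ t) (deriv y₀ t) * uu t) (cY x * uu x + cZ x * vv x) x := by
      intro x hx
      rw [Set.uIcc_of_le hab.le] at hx
      have h3 := (hQfd x).mul (hu x)
      rw [hELval x hx] at h3
      have h4 : fz f x (y₀ x) (deriv y₀ x) = cZ x := fzI hfF x _ _
      rw [h4] at h3
      exact h3
    have h5 := intervalIntegral.integral_eq_sub_of_hasDerivAt hD intL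
    rw [h5]
    simp [huua, huub]
  -- ============ cross term ============
  set Bf := fun t => fyz f t (y₀ t) (deriv y₀ t) with hBfdef
  have hBfeq : Bf = fun t => pdY (pdZ (FF f)) (t, y₀ t, deriv y₀ t) :=
    funext fun t => fyzI hfF t _ _
  have hBfd : ∀ x : ℝ, HasDerivAt Bf (dB x) x := by
    intro x
    have h2 := ((hB2C1.differentiable one_ne_zero) _).hasFDerivAt.comp_hasDerivAt x (hcurved x)
    rw [hBfeq]; exact h2
  have hBfc : Continuous Bf := by
    rw [hBfeq]; exact hB2C1.continuous.comp hcc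
  have intCross : IntervalIntegrable (fun x => dB x * (uu x)^2 + Bf x * (2 * uu x * vv x))
      volume a b := (Continuous.intervalIntegrable (by fun_prop) a b)
  have hCrosszero : (∫ x in a..b, (dB x * (uu x)^2 + Bf x * (2 * uu x * vv x))) = 0 := by
    have hD : ∀ x ∈ Set.uIcc a b, HasDerivAt (fun t => Bf t * (uu t)^2)
        (dB x * (uu x)^2 + Bf x * (2 * uu x * vv x)) x := by
      intro x _
      have h3 := (hBfd x).mul ((hu x).pow 2)
      norm_num at h3
      convert h3 using 2
      all_goals rfl
    have h5 := intervalIntegral.integral_eq_sub_of_hasDerivAt hD intCross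
    rw [h5]
    simp [huua, huub]
  -- ============ quadratic form lower bound ============
  set I2 := ∫ x in a..b, (uu x)^2 with hI2
  set I2' := ∫ x in a..b, (vv x)^2 with hI2'
  have hI2nn : 0 ≤ I2 := intervalIntegral.integral_nonneg hab.le (fun x _ => sq_nonneg _)
  have hI2'nn : 0 ≤ I2' := intervalIntegral.integral_nonneg hab.le (fun x _ => sq_nonneg _)
  have hqle : ∀ x ∈ Set.Icc a b, q ≤ cA x - dB x := by
    intro x hx
    have h1 := hq.2 (Set.mem_image_of_mem _ hx)
    beta_reduce at h1
    have h2 : fyy f x (y₀ x) (deriv y₀ x) = cA x := fyyI hfF x _ _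
    have h3 : deriv Bf x = dB x := (hBfd x).deriv
    linarith [h1, h2, h3]
  have hple : ∀ x ∈ Set.Icc a b, p ≤ cC x := by
    intro x hx
    have h1 := hp.2 (Set.mem_image_of_mem _ hx)
    beta_reduce at h1
    have h2 : fzz f x (y₀ x) (deriv y₀ x) = cC x := fzzI hfF x _ _
    linarith [h1, h2]
  have hquad : q * I2 + p * I2'
      ≤ ∫ x in a..b, ((cA x - dB x) * (uu x)^2 + cC x * (vv x)^2) := by
    have h1 : (∫ x in a..b, (q * (uu x)^2 + p * (vv x)^2))
        ≤ ∫ x in a..b, ((cA x - dB x) * (uu x)^2 + cC x * (vv x)^2) := by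
      apply intervalIntegral.integral_mono_on hab.le
        ((intu2.const_mul q).add (intv2.const_mul p)) intQA
      intro x hx
      have := mul_le_mul_of_nonneg_right (hqle x hx) (sq_nonneg (uu x))
      have := mul_le_mul_of_nonneg_right (hple x hx) (sq_nonneg (vv x))
      linarith
    have h2 : (∫ x in a..b, (q * (uu x)^2 + p * (vv x)^2)) = q * I2 + p * I2' := by
      rw [intervalIntegral.integral_add (intu2.const_mul q) (intv2.const_mul p),
        intervalIntegral.integral_const_mul, intervalIntegral.integral_const_mul]
    linarith
  have hQsplit : ∀ x : ℝ, cA x * (uu x)^2 + (cBz x + cB x) * (uu x * vv x) + cC x * (vv x)^2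
      = ((cA x - dB x) * (uu x)^2 + cC x * (vv x)^2)
        + (dB x * (uu x)^2 + Bf x * (2 * uu x * vv x)) := by
    intro x
    have hsym : cBz x = cB x := pd_symm (FF f) hfF (x, y₀ x, deriv y₀ x)
    have hBfx : Bf x = cB x := fyzI hfF x _ _
    rw [hsym, hBfx]; ring
  have hQint : (∫ x in a..b, (cA x * (uu x)^2 + (cBz x + cB x) * (uu x * vv x)
        + cC x * (vv x)^2))
      = (∫ x in a..b, ((cA x - dB x) * (uu x)^2 + cC x * (vv x)^2))
        + (∫ x in a..b, (dB x * (uu x)^2 + Bf x * (2 * uu x * vv x))) := by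
    rw [← intervalIntegral.integral_add intQA intCross]
    exact intervalIntegral.integral_congr (fun x _ => hQsplit x)
  -- ============ put the integrals together ============
  have h20 : (∫ x in a..b, ((cY x * uu x + cZ x * vv x)
        + (1/2) * (cA x * (uu x)^2 + (cBz x + cB x) * (uu x * vv x) + cC x * (vv x)^2)
        - (2*η*(uu x)^2 + 2*η*(vv x)^2)))
      ≤ ∫ x in a..b, (f x (y x) (deriv y x) - f x (y₀ x) (deriv y₀ x)) := by
    apply intervalIntegral.integral_mono_on hab.le
      ((intL.add (intQ.const_mul (1/2))).sub
        ((intu2.const_mul (2*η)).add (intv2.const_mul (2*η))))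
      (intg0.sub intg1)
    intro x hx
    linarith [master x hx]
  have hlin : (∫ x in a..b, ((cY x * uu x + cZ x * vv x)
        + (1/2) * (cA x * (uu x)^2 + (cBz x + cB x) * (uu x * vv x) + cC x * (vv x)^2)
        - (2*η*(uu x)^2 + 2*η*(vv x)^2)))
      = (∫ x in a..b, (cY x * uu x + cZ x * vv x))
        + (1/2) * (∫ x in a..b, (cA x * (uu x)^2 + (cBz x + cB x) * (uu x * vv x)
            + cC x * (vv x)^2))
        - (2*η*I2 + 2*η*I2') := by
    rw [intervalIntegral.integral_sub (intL.add (intQ.const_mul (1/2)))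
        ((intu2.const_mul (2*η)).add (intv2.const_mul (2*η))),
      intervalIntegral.integral_add intL (intQ.const_mul (1/2)),
      intervalIntegral.integral_const_mul,
      intervalIntegral.integral_add (intu2.const_mul (2*η)) (intv2.const_mul (2*η)),
      intervalIntegral.integral_const_mul, intervalIntegral.integral_const_mul]
  rw [hlin, hLzero, hQint, hCrosszero] at h20
  -- ============ Poincaré and final arithmetic ============
  have hPoin : I2 ≤ (b-a)^2 * I2' := poincare_s9 a b hab.le uu vv hu hvvc huua
  have hPhiEq : Phi f a b y - Phi f a b y₀
      = ∫ x in a..b, (f x (y x) (deriv y x) - f x (y₀ x) (deriv y₀ x)) := by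
    rw [Phi, Phi, ← intervalIntegral.integral_sub intg0 intg1]
  have hder : deriv uu = vv := by
    funext x
    rw [huu, hvv]
    exact deriv_sub (hyd x) (hy₀d x)
  have hH1 : H1normSq a b uu = I2 + I2' := by
    simp only [H1normSq, hder]
    rw [intervalIntegral.integral_add intu2 intv2]
  rw [hPhiEq, hH1]
  clear_value I2 I2'
  have hsum : I2 + I2' ≤ κ * I2' := by
    rw [hκdef]
    have e : (1+(b-a)^2) * I2' = I2' + (b-a)^2 * I2' := by ring
    rw [e]
    linarith [hPoin]
  have h9 : (2*η+cst)*(I2+I2') ≤ (2*η+cst)*(κ*I2') :=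
    mul_le_mul_of_nonneg_left hsum (by linarith [hηpos, hcst0])
  have h10 : 2*η*κ = p/2 - cst*κ := by
    rw [hηdef]
    field_simp
  have h11 : (2*η+cst)*(κ*I2') = (p/2) * I2' := by
    have h12 : 2*η*κ + cst*κ = p/2 := by linarith [h10]
    calc (2*η+cst)*(κ*I2') = (2*η*κ + cst*κ) * I2' := by ring
      _ = (p/2) * I2' := by rw [h12]
  have hqI2 : 0 ≤ q * I2 := mul_nonneg hqnonneg hI2nn
  rw [h11] at h9
  have e1 : (2*η+cst)*(I2+I2') = cst*(I2+I2') + 2*η*I2 + 2*η*I2' := by ring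
  rw [e1] at h9
  -- h9 : cst*(I2+I2') + 2*η*I2 + 2*η*I2' ≤ (p/2) * I2'
  linarith [h20, hquad, hqI2, h9]
end
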